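/- arXiv:1703.10010 — 15 statements merged into one kernel-verified Lean document; each statement's English description precedes it below -/
import Mathlib

section
/- Let w be a Christoffel word of length n, let m = |w|_1 be its number of 1's and p = |w|_0 its number of 0's. Then for all i in Z_n, the (i+1)-th letter of w satisfies w_{i+1} = 1 if and only if (m·i mod n) ≥ p. -/
/-- Let `w` be the Christoffel word of rate `m/n` (so of length `n`,
with `m` ones and `p = n - m` zeros), whose letters (0-indexed here, so `w i` is the
paper's `w_{i+1}`) are `w i = ⌊m(i+1)/n⌋ - ⌊m i /n⌋`.  Then for all `i ∈ Z_n`,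
`w_{i+1} = 1` if and only if `(m·i mod n) ≥ p`. -/
theorem stmt_0 (n m : ℕ) (hn : 0 < n) (hm : m ≤ n) (hco : Nat.Coprime m n)
    (w : ℕ → ℕ) (hw : ∀ k, w k = m * (k + 1) / n - m * k / n)
    (i : ℕ) (hi : i < n) :
    w i = 1 ↔ n - m ≤ m * i % n := by
  rw [hw]
  have hmi := Nat.div_add_mod (m * i) n
  set q := m * i / n with hq
  set r := m * i % n with hr
  have hrlt : r < n := Nat.mod_lt _ hn
  have key : m * (i + 1) / n = q + (r + m) / n := by
    have h2 : m * (i + 1) = n * q + (r + m) := by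
      have h3 : m * (i + 1) = m * i + m := by ring
      omega
    rw [h2, Nat.mul_add_div hn]
  rw [key]
  by_cases hc : n ≤ r + m
  · have : (r + m) / n = 1 := Nat.div_eq_of_lt_le (by omega) (by omega)
    omega
  · have : (r + m) / n = 0 := Nat.div_eq_of_lt (by omega)
    omega
end

section
/- Every Christoffel word other than 0 and 1 is of the form 0p1 where p is a palindrome. More precisely, for relatively prime positive integers m < n, the Christoffel word w of rate m/n satisfies w_{n−k} = w_{k+1} for k = 1, 2, …, n−2. -/
lemma key_flip (m n : ℕ) (hm : 0 < m) (hmn : m < n) (hco : Nat.Coprime m n)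
    (j : ℕ) (hj1 : 1 ≤ j) (hj2 : j ≤ n - 1) :
    m * (n - j) / n = m - m * j / n - 1 := by
  have hn : 0 < n := lt_trans hm hmn
  set q := m * j / n with hq
  set r := m * j % n with hr
  have hdiv : n * q + r = m * j := Nat.div_add_mod (m * j) n
  have hc : n * m = m * n := Nat.mul_comm n m
  have hrlt : r < n := Nat.mod_lt _ hn
  have hrne : r ≠ 0 := by
    intro h0
    have hdvd : n ∣ m * j := Nat.dvd_of_mod_eq_zero h0
    have : n ∣ j := Nat.Coprime.dvd_of_dvd_mul_left (hco.symm) hdvd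
    have := Nat.le_of_dvd (by omega) this
    omega
  have hsum : m * j + m * (n - j) = m * n := by
    rw [← Nat.mul_add]; congr 1; omega
  have hjn : m * j < m * n := by
    have : j < n := by omega
    exact Nat.mul_lt_mul_of_le_of_lt (le_refl m) this hm
  have hqm : q < m := by
    have h1 : n * q < n * m := by omega
    exact Nat.lt_of_mul_lt_mul_left h1
  obtain ⟨s, hs⟩ : ∃ s, m = q + 1 + s := ⟨m - q - 1, by omega⟩
  have hns : n * m = n * q + n + n * s := by rw [hs, Nat.mul_add, Nat.mul_add, Nat.mul_one]
  have hexp : m * (n - j) = n * s + (n - r) := by omega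
  rw [hexp, Nat.mul_add_div hn, Nat.div_eq_of_lt (by omega)]
  omega

/-- For relatively prime positive integers `m < n`, the Christoffel word
`w` of rate `m/n` (1-indexed letters `w k = ⌊mk/n⌋ - ⌊m(k-1)/n⌋` for `k = 1,…,n`)
is of the form `0p1` with `p` a palindrome: `w 1 = 0`, `w n = 1` and
`w (n - k) = w (k + 1)` for `k = 1, 2, …, n - 2`. -/
theorem stmt_1 (m n : ℕ) (hm : 0 < m) (hmn : m < n) (hco : Nat.Coprime m n)
    (w : ℕ → ℕ) (hw : ∀ k, w k = m * k / n - m * (k - 1) / n) :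
    w 1 = 0 ∧ w n = 1 ∧ ∀ k, 1 ≤ k → k ≤ n - 2 → w (n - k) = w (k + 1) := by
  have hn : 0 < n := lt_trans hm hmn
  refine ⟨?_, ?_, ?_⟩
  · rw [hw 1]
    simp [Nat.div_eq_of_lt hmn]
  · rw [hw n]
    have h1 : m * n / n = m := Nat.mul_div_cancel m hn
    have h2 : m * (n - 1) / n = m - 1 := by
      rw [key_flip m n hm hmn hco 1 le_rfl (by omega), Nat.mul_one,
        Nat.div_eq_of_lt hmn]
      omega
    omega
  · intro k hk1 hk2
    rw [hw (n - k), hw (k + 1)]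
    have e1 : n - k - 1 = n - (k + 1) := by omega
    rw [e1, key_flip m n hm hmn hco k hk1 (by omega),
        key_flip m n hm hmn hco (k + 1) (by omega) (by omega)]
    have hle : m * k / n ≤ m * (k + 1) / n :=
      Nat.div_le_div_right (Nat.mul_le_mul_left m (by omega))
    have hqm : m * (k + 1) / n < m := by
      apply Nat.div_lt_of_lt_mul
      rw [Nat.mul_comm n m]
      exact Nat.mul_lt_mul_of_le_of_lt (le_refl m) (by omega) hm
    simp
    omega
end

section
/- Let w be a Christoffel word of length n, let m = |w|_1, and let l satisfy l·m ≡ 1 (mod n). For i ∈ Z, let u(i) denote the conjugate of w obtained by cyclic rotation by i mod n, i.e., u(i) = w_{(ī+1):n} w_{1:ī} where ī = i mod n. Then the conjugates satisfy the strict lexicographic chain w = u(0) ≺ u(l) ≺ u(2l) ≺ ⋯ ≺ u((n−1)l) = w^R, where w^R is the reverse of w. -/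
private lemma lex_mid (u s t : List ℕ) (x y : ℕ) (h : x < y) :
    List.Lex (· < ·) (u ++ x :: s) (u ++ y :: t) := by
  induction u with
  | nil => exact List.Lex.rel h
  | cons a u ih => exact List.Lex.cons ih

private lemma lex_range (n : ℕ) (F G : ℕ → ℕ) (k : ℕ) (hk : k < n)
    (heq : ∀ i, i < k → F i = G i) (hlt : F k < G k) :
    List.Lex (· < ·) ((List.range n).map F) ((List.range n).map G) := by
  have hsplit : ∀ H : ℕ → ℕ, (List.range n).map H
      = (List.range k).map H ++ H k :: (List.range (n - k - 1)).map (fun i => H (k + 1 + i)) := by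
    intro H
    have h1 : n = k + (n - k - 1 + 1) := by omega
    rw [h1, List.range_add, List.map_append, List.range_succ_eq_map]
    simp [List.map_map, Function.comp_def]
    intro a _; congr 1; omega
  rw [hsplit F, hsplit G,
    show (List.range k).map F = (List.range k).map G from
      List.map_congr_left (fun a ha => heq a (List.mem_range.mp ha))]
  exact lex_mid _ _ _ _ _ hlt

private lemma mod_small (n a : ℕ) (hn : 0 < n) (h : a < 2 * n) :
    a % n = a ∨ a % n + n = a := by
  rcases Nat.lt_or_ge a n with h' | h'
  · left; exact Nat.mod_eq_of_lt h'
  · right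
    rw [Nat.mod_eq_sub_mod h', Nat.mod_eq_of_lt (by omega)]
    omega

/-- Let `w` be the Christoffel word of length `n` with `m = |w|₁` ones,
and let `l` satisfy `l·m ≡ 1 (mod n)`.  The conjugate `u(i)` obtained by cyclically
rotating `w` by `i mod n` positions is `w.rotate i`.  Then the conjugates form the
strict lexicographic chain `w = u(0) ≺ u(l) ≺ u(2l) ≺ ⋯ ≺ u((n-1)l) = w^R`. -/
theorem stmt_2 (n m l : ℕ) (hn : 0 < n) (hm : m < n) (hco : Nat.Coprime m n)
    (hl : l * m % n = 1)
    (w : List ℕ) (hw : w = (List.range n).map (fun i => m * (i + 1) / n - m * i / n)) :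
    w.rotate 0 = w ∧
    w.rotate ((n - 1) * l % n) = w.reverse ∧
    ∀ j : ℕ, j + 1 < n →
      List.Lex (· < ·) (w.rotate (j * l % n)) (w.rotate ((j + 1) * l % n)) := by
  have hm1 : 1 ≤ m := by
    rcases Nat.eq_zero_or_pos m with h | h
    · subst h; simp at hl
    · exact h
  have hn2 : 2 ≤ n := by
    have := Nat.mod_lt (l * m) hn; omega
  have hlen : w.length = n := by subst hw; simp
  have hmulmod : ∀ a : ℕ, m * (a % n) % n = m * a % n := by
    intro a
    conv_rhs => rw [Nat.mul_mod]
    rw [Nat.mul_mod, Nat.mod_mod_of_dvd _ dvd_rfl]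
  have hF0 : ∀ t, m * (t + 1) / n - m * t / n = (if n - m ≤ m * t % n then 1 else 0) := by
    intro t
    have h1 : m * (t + 1) = (m * t % n + m) + n * (m * t / n) := by
      have := Nat.div_add_mod (m * t) n; ring_nf; omega
    rw [h1, Nat.add_mul_div_left _ _ hn, Nat.add_sub_cancel]
    have hr : m * t % n < n := Nat.mod_lt _ hn
    rcases le_or_gt n (m * t % n + m) with h | h
    · rw [if_pos (by omega), Nat.div_eq_sub_div hn h, Nat.div_eq_of_lt (by omega)]
    · rw [if_neg (by omega), Nat.div_eq_of_lt h]
  have hwget : ∀ (t : ℕ) (h : t < w.length),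
      w[t] = (if n - m ≤ m * t % n then 1 else 0) := by
    intro t h
    subst hw
    simp only [List.getElem_map, List.getElem_range]
    exact hF0 t
  have hrot : ∀ r : ℕ, w.rotate r
      = (List.range n).map (fun k => if n - m ≤ (m * k + m * r) % n then 1 else 0) := by
    intro r
    apply List.ext_getElem
    · simp [hlen]
    · intro i h1 h2
      rw [List.getElem_rotate]
      rw [hwget _ (by rw [hlen]; exact Nat.mod_lt _ hn)]
      simp only [List.getElem_map, List.getElem_range]
      rw [hlen, hmulmod, Nat.mul_add]
  have hcancel : ∀ a b : ℕ, a < n → b < n → m * a % n = m * b % n → a = b := by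
    intro a b ha hb h
    exact (Nat.ModEq.cancel_left_of_coprime (Nat.Coprime.symm hco) h).eq_of_lt_of_lt ha hb
  have hpick : ∀ s : ℕ, s < n → m * (l * s % n) % n = s := by
    intro s hs
    rw [hmulmod, show m * (l * s) = s * (l * m) by ring, Nat.mul_mod, hl,
      Nat.mul_one, Nat.mod_mod_of_dvd _ dvd_rfl, Nat.mod_eq_of_lt hs]
  refine ⟨List.rotate_zero w, ?_, ?_⟩
  · -- reverse part
    rw [hrot]
    apply List.ext_getElem
    · simp [hlen]
    · intro i h1 h2
      have hi : i < n := by simpa using h1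
      rw [List.getElem_reverse, hwget _ (by omega)]
      simp only [List.getElem_map, List.getElem_range]
      rw [hlen]
      have hr1 : (m * i + m * ((n - 1) * l % n)) % n = (m * i % n + (n - 1)) % n := by
        rw [Nat.add_mod, show m * ((n - 1) * l % n) = m * (l * (n - 1) % n) by
            rw [Nat.mul_comm (n-1) l],
          hpick (n - 1) (by omega)]
      rw [hr1]
      set t : ℕ := m * i % n with htdef
      have ht : t < n := Nat.mod_lt _ hn
      set w1 : ℕ := (t + (n - 1)) % n with hw1def
      have hw1 : w1 < n := Nat.mod_lt _ hn
      set u : ℕ := m * (n - 1 - i) % n with hudef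
      have hu : u < n := Nat.mod_lt _ hn
      set v : ℕ := m * (i + 1) % n with hvdef
      have hv : v < n := Nat.mod_lt _ hn
      have hv2 : v = (t + m) % n := by
        rw [hvdef, htdef, Nat.mul_add, Nat.mul_one, Nat.add_mod, Nat.mod_eq_of_lt hm]
      have huv : (u + v) % n = 0 := by
        rw [hudef, hvdef, ← Nat.add_mod, ← Nat.mul_add,
          show n - 1 - i + (i + 1) = n by omega, Nat.mul_mod_left]
      have hc' : u + v = 0 ∨ u + v = n := by
        obtain ⟨c, hc⟩ := Nat.dvd_of_mod_eq_zero huv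
        have hclt : c < 2 := by nlinarith
        rcases (by omega : c = 0 ∨ c = 1) with h | h <;> rw [h] at hc <;> omega
      have hw1' : w1 = t + (n - 1) ∨ w1 + n = t + (n - 1) := by
        rw [hw1def]; exact mod_small n _ hn (by omega)
      have hv' : v = t + m ∨ v + n = t + m := by
        rw [hv2]; exact mod_small n _ hn (by omega)
      split_ifs <;> omega
  · -- lex chain part
    intro j hj
    rw [hrot, hrot]
    set s : ℕ := n - 1 - j with hs
    have hslt : s < n := by omega
    have hs1 : 1 ≤ s := by omega
    set k2 : ℕ := l * s % n with hk2
    have hk2lt : k2 < n := Nat.mod_lt _ hn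
    have hmk2 : m * k2 % n = s := hpick s hslt
    have hk2pos : 1 ≤ k2 := by
      rcases Nat.eq_zero_or_pos k2 with h | h
      · rw [h] at hmk2; simp at hmk2; omega
      · exact h
    set k1 : ℕ := k2 - 1 with hk1
    have hcondA : ∀ k : ℕ, (m * k + m * (j * l % n)) % n = (m * k % n + j) % n := by
      intro k
      rw [Nat.add_mod, show m * (j * l % n) = m * (l * j % n) by rw [Nat.mul_comm j l],
        hpick j (by omega)]
    have hcondB : ∀ k : ℕ, (m * k + m * ((j + 1) * l % n)) % n = (m * k % n + (j + 1)) % n := by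
      intro k
      rw [Nat.add_mod, show m * ((j + 1) * l % n) = m * (l * (j + 1) % n) by
          rw [Nat.mul_comm (j+1) l],
        hpick (j + 1) (by omega)]
    have hvk2 : (m * k2 % n + j) % n = n - 1 := by
      rw [hmk2, Nat.mod_eq_of_lt (by omega)]; omega
    have he : m * k1 + m = m * k2 := by
      have h1 : m * 1 ≤ m * k2 := Nat.mul_le_mul_left m hk2pos
      rw [hk1, Nat.mul_sub, Nat.mul_one]; omega
    set y : ℕ := (m * k1 % n + j) % n with hydef
    have hylt : y < n := Nat.mod_lt _ hn
    have hmk1 : y = n - m - 1 := by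
      have e1 : y + m ≡ m * k2 % n + j [MOD n] := by
        calc y + m ≡ (m * k1 % n + j) + m [MOD n] :=
              Nat.ModEq.add_right m (Nat.mod_modEq _ n)
          _ = m * k1 % n + m + j := by ring
          _ ≡ m * k1 + m + j [MOD n] :=
              Nat.ModEq.add_right j (Nat.ModEq.add_right m (Nat.mod_modEq _ n))
          _ = m * k2 + j := by rw [he]
          _ ≡ m * k2 % n + j [MOD n] :=
              Nat.ModEq.add_right j (Nat.mod_modEq _ n).symm
      have e2 : (y + m) % n = n - 1 := by
        rw [show (y + m) % n = (m * k2 % n + j) % n from e1, hvk2]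
      have := mod_small n (y + m) hn (by omega)
      rw [e2] at this
      omega
    have huniq : ∀ i : ℕ, i < n → (m * i % n + j) % n = (m * k2 % n + j) % n → i = k2 := by
      intro i hiltn hh
      have h2 : m * i % n ≡ m * k2 % n [MOD n] := Nat.ModEq.add_right_cancel' j hh
      exact hcancel i k2 hiltn hk2lt
        (h2.eq_of_lt_of_lt (Nat.mod_lt _ hn) (Nat.mod_lt _ hn))
    have huniq1 : ∀ i : ℕ, i < n → (m * i % n + j) % n = y → i = k1 := by
      intro i hiltn hh
      have h2 : m * i % n ≡ m * k1 % n [MOD n] := by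
        have : (m * i % n + j) % n = (m * k1 % n + j) % n := by rw [hh, hydef]
        exact Nat.ModEq.add_right_cancel' j this
      exact hcancel i k1 hiltn (by omega)
        (h2.eq_of_lt_of_lt (Nat.mod_lt _ hn) (Nat.mod_lt _ hn))
    apply lex_range n _ _ k1 (by omega)
    · intro i hik1
      have hiltn : i < n := by omega
      rw [hcondA i, hcondB i]
      set x : ℕ := (m * i % n + j) % n with hxdef
      have hxlt : x < n := Nat.mod_lt _ hn
      have hxne1 : x ≠ n - 1 := by
        intro hx
        have : i = k2 := huniq i hiltn (by rw [← hxdef, hx, hvk2])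
        omega
      have hxne2 : x ≠ n - m - 1 := by
        intro hx
        have : i = k1 := huniq1 i hiltn (by rw [← hxdef, hx, hmk1])
        omega
      have hb : (m * i % n + (j + 1)) % n = x + 1 := by
        rw [show m * i % n + (j + 1) = (m * i % n + j) + 1 by ring,
          Nat.add_mod, Nat.mod_eq_of_lt (show 1 < n by omega), ← hxdef,
          Nat.mod_eq_of_lt (by omega)]
      rw [hb]
      split_ifs <;> omega
    · rw [hcondA k1, hcondB k1]
      have hb : (m * k1 % n + (j + 1)) % n = y + 1 := by
        rw [show m * k1 % n + (j + 1) = (m * k1 % n + j) + 1 by ring,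
          Nat.add_mod, Nat.mod_eq_of_lt (show 1 < n by omega), ← hydef,
          Nat.mod_eq_of_lt (by omega)]
      rw [hb]
      rw [show (m * k1 % n + j) % n = y from hydef.symm]
      rw [if_neg (by omega), if_pos (by omega)]
      omega
end

section
/- Fix n ∈ ℕ and q ∈ [0,1]. Let q_1 < q_2 < ⋯ < q_m be the Farey sequence F_n, and for s ∈ [0,1] let p(s) be the first n letters of w^ω where w is the mechanical word of rate s. Then p(q) = p(q_i) if and only if either q = q_i = 1, or q ∈ [q_i, q_{i+1}) for some 1 ≤ i < m. -/
/-- Fix `n ∈ ℕ` and `q ∈ [0,1]`.  Let `q_1 < ⋯ < q_m` be the Farey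
sequence `F_n` (the increasing enumeration of the rationals in `[0,1]` with denominator
at most `n`), and for `s ∈ [0,1]` let `p s` be the first `n` letters of the mechanical
word of rate `s`, i.e. `(p s) k = ⌊s(k+1)⌋ - ⌊s k⌋` for `k = 0,…,n-1` (0-indexed).
Then `p q = p (q_i)` if and only if either `q = q_i = 1`, or
`q ∈ [q_i, q_{i+1})` for some `1 ≤ i < m`. -/
theorem stmt_3 (n : ℕ) (hn : 0 < n) (m : ℕ) (q_ : Fin m → ℚ)
    (hmono : StrictMono q_)
    (hrange : Set.range q_ = {x : ℚ | 0 ≤ x ∧ x ≤ 1 ∧ x.den ≤ n})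
    (q : ℝ) (hq0 : 0 ≤ q) (hq1 : q ≤ 1)
    (p : ℝ → Fin n → ℤ)
    (hp : ∀ s (k : Fin n), p s k = ⌊s * ((k : ℕ) + 1)⌋ - ⌊s * (k : ℕ)⌋)
    (i : Fin m) :
    p q = p (q_ i) ↔
      ((q = (q_ i : ℝ) ∧ (q_ i : ℚ) = 1) ∨
        ∃ h : (i : ℕ) + 1 < m, ((q_ i : ℝ) ≤ q ∧ q < (q_ ⟨(i : ℕ) + 1, h⟩ : ℝ))) := by
  -- basic facts about q_ i
  have hqi : 0 ≤ q_ i ∧ q_ i ≤ 1 ∧ (q_ i).den ≤ n := by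
    have : q_ i ∈ Set.range q_ := ⟨i, rfl⟩
    rwa [hrange] at this
  -- key equivalence: p s = p t ↔ floors agree up to n
  have key : ∀ s t : ℝ, (p s = p t ↔ ∀ k : ℕ, k ≤ n → ⌊s * k⌋ = ⌊t * k⌋) := by
    intro s t
    constructor
    · intro h k hk
      induction k with
      | zero => simp
      | succ k ih =>
        have hk' : k < n := hk
        have h1 := congrFun h ⟨k, hk'⟩
        rw [hp, hp] at h1
        have ihk := ih (le_of_lt hk')
        push_cast at h1 ⊢
        omega
    · intro h
      funext k
      rw [hp, hp]
      have h1 := h (k + 1) k.2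
      have h2 := h k (le_of_lt k.2)
      push_cast at h1 h2 ⊢
      omega
  constructor
  · intro hpq
    have heq : ∀ k : ℕ, k ≤ n → ⌊q * k⌋ = ⌊(q_ i : ℝ) * k⌋ := (key _ _).mp hpq
    by_cases hone : q_ i = 1
    · left
      refine ⟨?_, hone⟩
      have h1 := heq n le_rfl
      rw [hone] at h1
      simp at h1
      -- h1 : ⌊q * n⌋ = n
      have hle : q * n ≤ n := by
        calc q * n ≤ 1 * n := by
              apply mul_le_mul_of_nonneg_right hq1 (by positivity)
        _ = n := one_mul _
      have hge : (n : ℝ) ≤ q * n := by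
        have := Int.floor_le (q * (n : ℝ))
        rw [h1] at this
        exact_mod_cast this
      have : q * n = n := le_antisymm hle hge
      have hn' : (n:ℝ) ≠ 0 := by positivity
      have hq : q = 1 := mul_right_cancel₀ hn' (by rw [one_mul]; exact this)
      rw [hq, hone]; norm_num
    · right
      -- q_ i < 1, so there is a larger element, hence i+1 < m
      have h1mem : (1 : ℚ) ∈ Set.range q_ := by
        rw [hrange]; exact ⟨zero_le_one, le_refl 1, by simp; omega⟩
      obtain ⟨j, hj⟩ := h1mem
      have hij : i < j := by
        rw [← hmono.lt_iff_lt, hj]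
        exact lt_of_le_of_ne hqi.2.1 hone
      have hm : (i : ℕ) + 1 < m := lt_of_le_of_lt (Nat.succ_le_of_lt hij) j.2
      refine ⟨hm, ?_, ?_⟩
      · -- lower bound using k = den
        set d := (q_ i).den with hd
        have hd0 : 0 < d := (q_ i).pos
        have hfl := heq d hqi.2.2
        have hnum : (q_ i : ℝ) * d = ((q_ i).num : ℝ) := by
          have : (q_ i) * (d : ℚ) = ((q_ i).num : ℚ) := by
            rw [hd]
            rw [mul_comm, Rat.den_mul_eq_num]
          exact_mod_cast congrArg (Rat.cast : ℚ → ℝ) this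
        rw [hnum] at hfl
        simp at hfl
        have : ((q_ i).num : ℝ) ≤ q * d := by
          have := Int.floor_le (q * (d : ℝ))
          rw [hfl] at this
          exact_mod_cast this
        rw [← hnum] at this
        have hd0' : (0:ℝ) < d := by exact_mod_cast hd0
        exact le_of_mul_le_mul_right this hd0'
      · -- upper bound
        by_contra hcon
        push_neg at hcon
        set r := q_ ⟨(i : ℕ) + 1, hm⟩ with hr
        have hrmem : 0 ≤ r ∧ r ≤ 1 ∧ r.den ≤ n := by
          have : r ∈ Set.range q_ := ⟨_, rfl⟩
          rwa [hrange] at this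
        have hir : q_ i < r := hmono (by simp [Fin.lt_def])
        set d := r.den with hd
        have hd0 : 0 < d := r.pos
        have hfl := heq d hrmem.2.2
        have hnum : (r : ℝ) * d = (r.num : ℝ) := by
          have : r * (d : ℚ) = (r.num : ℚ) := by rw [hd, mul_comm, Rat.den_mul_eq_num]
          exact_mod_cast congrArg (Rat.cast : ℚ → ℝ) this
        have hd0' : (0:ℝ) < d := by exact_mod_cast hd0
        have hup : (r.num : ℝ) ≤ q * d := by
          rw [← hnum]
          exact mul_le_mul_of_nonneg_right hcon (le_of_lt hd0')
        have hlow : (q_ i : ℝ) * d < (r.num : ℝ) := by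
          rw [← hnum]
          exact mul_lt_mul_of_pos_right (by exact_mod_cast hir) hd0'
        have h1 : r.num ≤ ⌊q * (d:ℝ)⌋ := Int.le_floor.mpr hup
        have h2 : ⌊(q_ i : ℝ) * d⌋ < r.num := Int.floor_lt.mpr hlow
        rw [hfl] at h1
        omega
  · intro h
    rcases h with ⟨hq, _⟩ | ⟨hm, hle, hlt⟩
    · rw [hq]
    · rw [key]
      intro k hk
      rcases Nat.eq_zero_or_pos k with rfl | hk0
      · simp
      set r := q_ ⟨(i : ℕ) + 1, hm⟩ with hr
      have hrmem : 0 ≤ r ∧ r ≤ 1 ∧ r.den ≤ n := by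
        have : r ∈ Set.range q_ := ⟨_, rfl⟩
        rwa [hrange] at this
      have hge : ⌊(q_ i : ℝ) * k⌋ ≤ ⌊q * k⌋ :=
        Int.floor_le_floor (mul_le_mul_of_nonneg_right hle (by positivity))
      by_contra hne
      have hgt : ⌊(q_ i : ℝ) * k⌋ + 1 ≤ ⌊q * k⌋ := by omega
      set j : ℤ := ⌊(q_ i : ℝ) * k⌋ + 1 with hjdef
      have hjle : (j : ℝ) ≤ q * k := le_trans (by exact_mod_cast hgt) (Int.floor_le _)
      have hjgt : (q_ i : ℝ) * k < j := by
        rw [hjdef]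
        push_cast
        exact Int.lt_floor_add_one _
      -- the rational j / k lies strictly between q_ i and q_{i+1}
      set s : ℚ := (j : ℚ) / (k : ℚ) with hs
      have hk0' : (0:ℚ) < (k:ℚ) := by exact_mod_cast hk0
      have hk0r : (0:ℝ) < (k:ℝ) := by exact_mod_cast hk0
      have hscast : (s : ℝ) = (j : ℝ) / (k : ℝ) := by push_cast [hs]; ring
      have hs1 : q_ i < s := by
        have : ((q_ i : ℚ) : ℝ) < (s : ℝ) := by
          rw [hscast, lt_div_iff₀ hk0r]; exact hjgt
        exact_mod_cast this
      have hs2 : (s:ℝ) ≤ q := by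
        rw [hscast, div_le_iff₀ hk0r]
        exact hjle
      have hs3 : s < r := by
        have : (s : ℝ) < (r : ℝ) := lt_of_le_of_lt hs2 hlt
        exact_mod_cast this
      have hs0 : 0 ≤ s := le_of_lt (lt_of_le_of_lt hqi.1 hs1)
      have hsle1 : s ≤ 1 := le_of_lt (lt_of_lt_of_le hs3 hrmem.2.1)
      have hsden : s.den ≤ n := by
        have hdvd : (s.den : ℤ) ∣ (k : ℤ) := by
          have hs' : s = Rat.divInt j (k : ℤ) := by
            rw [hs, Rat.divInt_eq_div]; norm_num
          rw [hs']
          exact Rat.den_dvd j k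
        have : s.den ∣ k := by exact_mod_cast hdvd
        exact le_trans (Nat.le_of_dvd hk0 this) hk
      have hsmem : s ∈ Set.range q_ := by rw [hrange]; exact ⟨hs0, hsle1, hsden⟩
      obtain ⟨t, ht⟩ := hsmem
      have h1 : i < t := by rw [← hmono.lt_iff_lt, ht]; exact hs1
      have h2 : t < ⟨(i:ℕ)+1, hm⟩ := by rw [← hmono.lt_iff_lt, ht]; exact hs3
      rw [Fin.lt_def] at h1 h2
      simp at h2
      omega
end

section
/- Let a, b be binary words of common length n with |a|_1 = |b|_1 and |a_{1:k}|_1 ≥ |b_{1:k}|_1 for all k < n. Then a swaps to b; moreover, a swaps to b in exactly d(a,b) := Σ_{i=1}^n | |a_{1:i}|_1 − |b_{1:i}|_1 | exchanges. -/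
/-- An *exchange* replaces a factor `10` by `01` at a single position. -/
def Exchange (a b : List Bool) : Prop :=
  ∃ p q : List Bool, a = p ++ [true, false] ++ q ∧ b = p ++ [false, true] ++ q

namespace Stmt4Aux

open List Finset

lemma take_count_succ (l : List Bool) (k : ℕ) (h : k < l.length) :
    (l.take (k+1)).count true
      = (l.take k).count true + (l[k]).toNat := by
  rw [List.take_succ, List.getElem?_eq_getElem h]
  cases hx : l[k] <;> simp [hx, List.count_append]

lemma toNat_le_one (x : Bool) : x.toNat ≤ 1 := by cases x <;> simp

lemma eq_of_take_count (a b : List Bool) (hlen : a.length = b.length)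
    (h : ∀ k, ((a.take k).count true) = ((b.take k).count true)) : a = b := by
  induction a generalizing b with
  | nil => simp at hlen; exact (List.length_eq_zero_iff.mp hlen.symm).symm
  | cons x a ih =>
    cases b with
    | nil => simp at hlen
    | cons y b =>
      have h1 := h 1
      simp [List.count_cons] at h1
      have hxy : x = y := by cases x <;> cases y <;> simp_all
      subst hxy
      have : a = b := by
        apply ih
        · simpa using hlen
        · intro k
          have := h (k+1)
          simpa [List.count_cons] using this
      rw [this]

lemma take_append_big (p r : List Bool) (k : ℕ) (h : p.length ≤ k) :
    (p ++ r).take k = p ++ r.take (k - p.length) := by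
  rw [List.take_append, List.take_of_length_le h]

lemma count_take_exchange (p q : List Bool) (k : ℕ) (hk : k ≠ p.length + 1) :
    ((p ++ [false, true] ++ q).take k).count true
      = ((p ++ [true, false] ++ q).take k).count true := by
  rcases le_or_gt k p.length with h | h
  · rw [List.append_assoc, List.append_assoc, List.take_append_of_le_length h,
        List.take_append_of_le_length h]
  · have hk2 : p.length + 2 ≤ k := by omega
    rw [List.append_assoc, List.append_assoc,
        take_append_big p _ k (by omega), take_append_big p _ k (by omega),
        take_append_big [false, true] q _ (by simp; omega),
        take_append_big [true, false] q _ (by simp; omega)]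
    simp [List.count_append, List.count_cons]

lemma count_take_exchange_mid (p q : List Bool) :
    ((p ++ [false, true] ++ q).take (p.length + 1)).count true + 1
      = ((p ++ [true, false] ++ q).take (p.length + 1)).count true := by
  rw [List.append_assoc, List.append_assoc,
      take_append_big p _ _ (by omega), take_append_big p _ _ (by omega)]
  have h1 : p.length + 1 - p.length = 1 := by omega
  rw [h1]
  simp [List.count_append]

lemma step (n : ℕ) (a b : List Bool) (ha : a.length = n) (hb : b.length = n)
    (hcount : a.count true = b.count true)
    (hpre : ∀ k < n, (b.take k).count true ≤ (a.take k).count true)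
    (hpos : 0 < ∑ i ∈ range n,
      (((a.take (i+1)).count true : ℤ) - ((b.take (i+1)).count true : ℤ)).natAbs) :
    ∃ a', Exchange a a' ∧ a'.length = n ∧ a'.count true = b.count true ∧
      (∀ k < n, (b.take k).count true ≤ (a'.take k).count true) ∧
      (∑ i ∈ range n,
        (((a'.take (i+1)).count true : ℤ) - ((b.take (i+1)).count true : ℤ)).natAbs) + 1
        = ∑ i ∈ range n,
          (((a.take (i+1)).count true : ℤ) - ((b.take (i+1)).count true : ℤ)).natAbs := by
  have hge : ∀ k, (b.take k).count true ≤ (a.take k).count true := by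
    intro k
    rcases lt_or_ge k n with h | h
    · exact hpre k h
    · rw [List.take_of_length_le (by omega), List.take_of_length_le (by omega)]
      omega
  have hfull : ∀ k, n ≤ k → (a.take k).count true = (b.take k).count true := by
    intro k h
    rw [List.take_of_length_le (by omega), List.take_of_length_le (by omega)]
    exact hcount
  -- find some index with strict inequality
  obtain ⟨i, hi, hine⟩ := Finset.exists_ne_zero_of_sum_ne_zero (by omega :
    ∑ i ∈ range n,
      (((a.take (i+1)).count true : ℤ) - ((b.take (i+1)).count true : ℤ)).natAbs ≠ 0)
  rw [Finset.mem_range] at hi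
  have hipos : (b.take (i+1)).count true < (a.take (i+1)).count true := by
    have := hge (i+1); omega
  -- j : greatest index ≤ n where a's prefix has strictly more ones
  obtain ⟨j, hjP, hjle, hjgr⟩ :
      ∃ j, ((b.take j).count true < (a.take j).count true) ∧ j ≤ n ∧
        (∀ k, j < k → k ≤ n → ¬ ((b.take k).count true < (a.take k).count true)) :=
    ⟨Nat.findGreatest (fun k => (b.take k).count true < (a.take k).count true) n,
      Nat.findGreatest_spec
        (P := fun k => (b.take k).count true < (a.take k).count true)
        (by omega : i + 1 ≤ n) hipos,
      Nat.findGreatest_le n,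
      fun k h1 h2 => Nat.findGreatest_is_greatest
        (P := fun k => (b.take k).count true < (a.take k).count true) h1 h2⟩
  have hjlt : j < n := by
    rcases eq_or_lt_of_le hjle with h | h
    · exfalso; have := hfull n le_rfl; rw [h] at hjP; omega
    · exact h
  have hdj1 : (a.take (j+1)).count true = (b.take (j+1)).count true := by
    have h2 : ¬ ((b.take (j+1)).count true < (a.take (j+1)).count true) :=
      hjgr (j+1) (by omega) (by omega)
    have := hge (j+1)
    omega
  have hj1 : 1 ≤ j := by
    by_contra h
    have h0 : j = 0 := by omega
    rw [h0] at hjP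
    simp at hjP
  -- a[j] = false
  have hstepa := take_count_succ a j (by omega)
  have hstepb := take_count_succ b j (by omega)
  have haj : a[j]'(by omega) = false := by
    by_contra hcon
    have h' : a[j]'(by omega) = true := by simpa using hcon
    rw [h'] at hstepa
    simp only [Bool.toNat_true] at hstepa
    have htb := toNat_le_one (b[j]'(by omega))
    omega
  -- there is a true in a.take j
  have hmem : true ∈ a.take j := List.count_pos_iff.mp (by omega)
  obtain ⟨i1, hi1lt, hi1⟩ := List.getElem_of_mem hmem
  have hi1lt' : i1 < j := by
    have := hi1lt
    rw [List.length_take] at this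
    omega
  rw [List.getElem_take] at hi1
  -- m : greatest index ≤ j-1 where a is true
  obtain ⟨m, hmQ, hmle, hmgr⟩ :
      ∃ m, (a.getD m false = true) ∧ m ≤ j - 1 ∧
        (∀ k, m < k → k ≤ j - 1 → ¬ (a.getD k false = true)) :=
    ⟨Nat.findGreatest (fun k => a.getD k false = true) (j-1),
      Nat.findGreatest_spec (P := fun k => a.getD k false = true)
        (by omega : i1 ≤ j - 1)
        (by show a.getD i1 false = true; rw [List.getD_eq_getElem _ _ (by omega)]; exact hi1),
      Nat.findGreatest_le (j-1),
      fun k h1 h2 => Nat.findGreatest_is_greatest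
        (P := fun k => a.getD k false = true) h1 h2⟩
  have hmlt : m + 1 ≤ j := by omega
  have ham : a[m]'(by omega) = true := by
    rwa [List.getD_eq_getElem _ _ (by omega)] at hmQ
  have hmmax : ∀ k, m < k → k ≤ j → a.getD k false = false := by
    intro k hk1 hk2
    rcases eq_or_lt_of_le hk2 with h | h
    · subst h; rw [List.getD_eq_getElem _ _ (by omega)]; exact haj
    · have hng := hmgr k hk1 (by omega)
      rw [List.getD_eq_getElem _ _ (by omega)] at hng ⊢
      simpa using hng
  -- monotonicity: the count surplus persists from m+1 back up to j
  have hmono : ∀ t, m + 1 ≤ j - t →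
      (b.take (j-t)).count true < (a.take (j-t)).count true := by
    intro t
    induction t with
    | zero => intro _; simpa using hjP
    | succ s ihs =>
      intro ht
      have hks : j - (s+1) + 1 = j - s := by omega
      have hstep2 := take_count_succ a (j - (s+1)) (by omega)
      have hstep3 := take_count_succ b (j - (s+1)) (by omega)
      have hak : a[j - (s+1)]'(by omega) = false := by
        have := hmmax (j - (s+1)) (by omega) (by omega)
        rwa [List.getD_eq_getElem _ _ (by omega)] at this
      rw [hak] at hstep2
      simp only [Bool.toNat_false] at hstep2
      have ihs' := ihs (by omega)
      rw [← hks] at ihs'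
      have htb := toNat_le_one (b[j - (s+1)]'(by omega))
      omega
  have hdm1 : (b.take (m+1)).count true < (a.take (m+1)).count true := by
    have := hmono (j - (m+1)) (by omega)
    have h2 : j - (j - (m+1)) = m + 1 := by omega
    rw [h2] at this
    exact this
  -- construct a'
  obtain ⟨p, hp⟩ : ∃ p, p = a.take m := ⟨_, rfl⟩
  obtain ⟨q, hq⟩ : ∃ q, q = a.drop (m+2) := ⟨_, rfl⟩
  have hplen : p.length = m := by rw [hp]; simp; omega
  have ham1 : a[m+1]'(by omega) = false := by
    have := hmmax (m+1) (by omega) (by omega)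
    rwa [List.getD_eq_getElem _ _ (by omega)] at this
  have ha_eq : a = p ++ [true, false] ++ q := by
    have h1 : a.drop m = a[m]'(by omega) :: a.drop (m+1) := List.drop_eq_getElem_cons (by omega)
    have h2 : a.drop (m+1) = a[m+1]'(by omega) :: a.drop (m+2) :=
      List.drop_eq_getElem_cons (by omega)
    rw [ham] at h1
    rw [ham1] at h2
    conv_lhs => rw [← List.take_append_drop m a, h1, h2]
    rw [hp, hq]
    simp
  have hmidc : ((p ++ [false, true] ++ q).take (m+1)).count true + 1
      = (a.take (m+1)).count true := by
    have := count_take_exchange_mid p q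
    rw [hplen] at this
    rw [this, ← ha_eq]
  refine ⟨p ++ [false, true] ++ q, ⟨p, q, ha_eq, rfl⟩, ?_, ?_, ?_, ?_⟩
  · rw [← ha]; conv_rhs => rw [ha_eq]
    simp
  · rw [← hcount]; conv_rhs => rw [ha_eq]
    simp [List.count_append]
  · intro k hk
    rcases eq_or_ne k (m+1) with h | h
    · subst h
      omega
    · rw [count_take_exchange p q k (by omega), ← ha_eq]
      exact hpre k hk
  · have hmmem : m ∈ Finset.range n := Finset.mem_range.mpr (by omega)
    rw [← Finset.add_sum_erase _ _ hmmem, ← Finset.add_sum_erase _ _ hmmem]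
    have hsc : ∑ i ∈ (Finset.range n).erase m,
        ((((p ++ [false, true] ++ q).take (i+1)).count true : ℤ)
          - ((b.take (i+1)).count true : ℤ)).natAbs
        = ∑ i ∈ (Finset.range n).erase m,
          (((a.take (i+1)).count true : ℤ) - ((b.take (i+1)).count true : ℤ)).natAbs := by
      apply Finset.sum_congr rfl
      intro i2 hi2
      have hne := Finset.ne_of_mem_erase hi2
      rw [count_take_exchange p q (i2+1) (by omega), ← ha_eq]
    rw [hsc]
    omega

lemma main_aux (D : ℕ) : ∀ (n : ℕ) (a b : List Bool), a.length = n → b.length = n →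
    a.count true = b.count true →
    (∀ k < n, (b.take k).count true ≤ (a.take k).count true) →
    (∑ i ∈ range n,
      (((a.take (i+1)).count true : ℤ) - ((b.take (i+1)).count true : ℤ)).natAbs) = D →
    ∃ f : ℕ → List Bool, f 0 = a ∧ f D = b ∧ ∀ i < D, Exchange (f i) (f (i+1)) := by
  induction D with
  | zero =>
    intro n a b ha hb hcount hpre hsum
    have hab : a = b := by
      apply eq_of_take_count a b (by omega)
      intro k
      rcases le_or_gt k n with h | h
      · cases k with
        | zero => simp
        | succ k' =>
          have := (Finset.sum_eq_zero_iff.mp hsum) k' (Finset.mem_range.mpr (by omega))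
          omega
      · rw [List.take_of_length_le (by omega), List.take_of_length_le (by omega)]
        exact hcount
    subst hab
    exact ⟨fun _ => a, rfl, rfl, fun i hi => absurd hi (by omega)⟩
  | succ m ih =>
    intro n a b ha hb hcount hpre hsum
    obtain ⟨a', hex, hlen, hcnt, hpre', hsum'⟩ :=
      step n a b ha hb hcount hpre (by omega)
    obtain ⟨g, hg0, hgm, hge⟩ := ih n a' b hlen hb hcnt hpre' (by omega)
    refine ⟨fun k => if k = 0 then a else g (k-1), by simp, by simp [hgm], ?_⟩
    intro i hi
    cases i with
    | zero => simpa [hg0] using hex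
    | succ k =>
      have := hge k (by omega)
      simpa using this

end Stmt4Aux

/-- If `a, b` are binary words of common length `n` with the same number
of ones, and every prefix of `a` of length `k < n` has at least as many ones as the
corresponding prefix of `b`, then `a` swaps to `b` in exactly
`d(a,b) = Σ_{i=1}^n | |a_{1:i}|₁ - |b_{1:i}|₁ |` exchanges. -/
theorem stmt_4 (n : ℕ) (a b : List Bool) (ha : a.length = n) (hb : b.length = n)
    (hcount : a.count true = b.count true)
    (hpre : ∀ k < n, (b.take k).count true ≤ (a.take k).count true) :
    ∃ f : ℕ → List Bool, f 0 = a ∧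
      f (∑ i ∈ Finset.range n,
          (((a.take (i + 1)).count true : ℤ) - ((b.take (i + 1)).count true : ℤ)).natAbs)
        = b ∧
      ∀ i < ∑ i ∈ Finset.range n,
          (((a.take (i + 1)).count true : ℤ) - ((b.take (i + 1)).count true : ℤ)).natAbs,
        Exchange (f i) (f (i + 1)) := by
  exact Stmt4Aux.main_aux _ n a b ha hb hcount hpre rfl
end

section
/- Suppose a_1 ≤ ⋯ ≤ a_n and b_1 ≤ ⋯ ≤ b_n are non-decreasing sequences of positive reals with Σ_{i=1}^k a_i ≤ Σ_{i=1}^k b_i for each k = 1,…,n. Suppose for each i the function f_i : (0,∞) → ℝ is non-increasing and convex, and for each i = 2,…,n the difference f_{i−1}(x) − f_i(x) is non-increasing in x. Then Σ_{i=1}^n f_i(a_i) ≥ Σ_{i=1}^n f_i(b_i). -/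
/-- Slope of a convex function on `Ioi 0` is monotone in both endpoints. -/
lemma slope_mono_aux {f : ℝ → ℝ} (hf : ConvexOn ℝ (Set.Ioi (0:ℝ)) f)
    {x1 y1 x2 y2 : ℝ} (hx1 : 0 < x1) (hx2 : 0 < x2)
    (h11 : x1 < y1) (h22 : x2 < y2) (hx : x1 ≤ x2) (hy : y1 ≤ y2) :
    (f y1 - f x1) / (y1 - x1) ≤ (f y2 - f x2) / (y2 - x2) := by
  have hy1 : (0:ℝ) < y1 := hx1.trans h11
  have hy2 : (0:ℝ) < y2 := hx2.trans h22
  have step1 : (f y1 - f x1) / (y1 - x1) ≤ (f y2 - f x1) / (y2 - x1) :=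
    hf.secant_mono (a := x1) hx1 hy1 hy2 h11.ne' (h11.trans_le hy).ne' hy
  have step2 : (f x1 - f y2) / (x1 - y2) ≤ (f x2 - f y2) / (x2 - y2) :=
    hf.secant_mono (a := y2) hy2 hx1 hx2 (hx.trans_lt h22).ne (h22.ne) hx
  have e1 : (f y2 - f x1) / (y2 - x1) = (f x1 - f y2) / (x1 - y2) := by
    rw [← neg_div_neg_eq]; ring_nf
  have e2 : (f x2 - f y2) / (x2 - y2) = (f y2 - f x2) / (y2 - x2) := by
    rw [← neg_div_neg_eq]; ring_nf
  calc (f y1 - f x1) / (y1 - x1) ≤ (f y2 - f x1) / (y2 - x1) := step1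
    _ = (f x1 - f y2) / (x1 - y2) := e1
    _ ≤ (f x2 - f y2) / (x2 - y2) := step2
    _ = (f y2 - f x2) / (y2 - x2) := e2

/-- Abel-summation bound: if `c` is nondecreasing on `[1,n]` and the partial sums of `e`
are nonnegative, then `∑ cᵢ eᵢ ≤ c n * ∑ eᵢ`. -/
lemma abel_aux (c e : ℕ → ℝ) :
    ∀ n, 1 ≤ n → (∀ i, 1 ≤ i → i + 1 ≤ n → c i ≤ c (i + 1)) →
    (∀ k, 1 ≤ k → k ≤ n → 0 ≤ ∑ i ∈ Finset.Icc 1 k, e i) →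
    ∑ i ∈ Finset.Icc 1 n, c i * e i ≤ c n * ∑ i ∈ Finset.Icc 1 n, e i := by
  intro n hn
  induction n, hn using Nat.le_induction with
  | base => intro _ _; simp
  | succ n hn ih =>
    intro hc hE
    have ih' := ih (fun i h1 h2 => hc i h1 (h2.trans (Nat.le_succ n)))
      (fun k h1 h2 => hE k h1 (h2.trans (Nat.le_succ n)))
    rw [Finset.sum_Icc_succ_top (by omega : 1 ≤ n + 1),
        Finset.sum_Icc_succ_top (by omega : 1 ≤ n + 1)]
    have hcc : c n ≤ c (n + 1) := hc n hn le_rfl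
    have hEn : 0 ≤ ∑ i ∈ Finset.Icc 1 n, e i := hE n hn (Nat.le_succ n)
    nlinarith [ih']

/-- (Majorisation inequality.)  If `a₁ ≤ ⋯ ≤ aₙ` and `b₁ ≤ ⋯ ≤ bₙ` are
non-decreasing sequences of positive reals with `Σ_{i≤k} aᵢ ≤ Σ_{i≤k} bᵢ` for each
`k = 1,…,n`, and each `fᵢ : (0,∞) → ℝ` is non-increasing and convex with
`f_{i-1} - fᵢ` non-increasing for `i = 2,…,n`, then
`Σ fᵢ(aᵢ) ≥ Σ fᵢ(bᵢ)`. -/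
theorem stmt_5 (n : ℕ) (a b : ℕ → ℝ) (f : ℕ → ℝ → ℝ)
    (ha_pos : ∀ i, 1 ≤ i → i ≤ n → 0 < a i)
    (hb_pos : ∀ i, 1 ≤ i → i ≤ n → 0 < b i)
    (ha_mono : ∀ i, 1 ≤ i → i + 1 ≤ n → a i ≤ a (i + 1))
    (hb_mono : ∀ i, 1 ≤ i → i + 1 ≤ n → b i ≤ b (i + 1))
    (hsum : ∀ k, 1 ≤ k → k ≤ n → ∑ i ∈ Finset.Icc 1 k, a i ≤ ∑ i ∈ Finset.Icc 1 k, b i)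
    (hf_anti : ∀ i, 1 ≤ i → i ≤ n → ∀ x y : ℝ, 0 < x → x ≤ y → f i y ≤ f i x)
    (hf_conv : ∀ i, 1 ≤ i → i ≤ n → ConvexOn ℝ (Set.Ioi (0 : ℝ)) (f i))
    (hdiff : ∀ i, 2 ≤ i → i ≤ n → ∀ x y : ℝ, 0 < x → x ≤ y →
      f (i - 1) y - f i y ≤ f (i - 1) x - f i x) :
    ∑ i ∈ Finset.Icc 1 n, f i (b i) ≤ ∑ i ∈ Finset.Icc 1 n, f i (a i) := by
  rcases Nat.eq_zero_or_pos n with rfl | hn1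
  · simp
  -- basic monotonicity facts
  have ha1 : ∀ i, 1 ≤ i → i ≤ n → a 1 ≤ a i := by
    intro i hi
    induction i, hi using Nat.le_induction with
    | base => intro _; exact le_rfl
    | succ i hi ih => intro h; exact (ih (by omega)).trans (ha_mono i hi h)
  have hb1 : ∀ i, 1 ≤ i → i ≤ n → b 1 ≤ b i := by
    intro i hi
    induction i, hi using Nat.le_induction with
    | base => intro _; exact le_rfl
    | succ i hi ih => intro h; exact (ih (by omega)).trans (hb_mono i hi h)
  have hab1 : a 1 ≤ b 1 := by have := hsum 1 le_rfl hn1; simpa using this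
  set p : ℝ := a 1 / 2 with hp_def
  have ha1pos : 0 < a 1 := ha_pos 1 le_rfl hn1
  have hp_pos : 0 < p := by positivity
  have hp_lt_a : ∀ i, 1 ≤ i → i ≤ n → p < a i := by
    intro i h1 h2; have := ha1 i h1 h2; rw [hp_def]; linarith
  have hp_lt_b : ∀ i, 1 ≤ i → i ≤ n → p < b i := by
    intro i h1 h2; have := hb1 i h1 h2; linarith [hp_lt_a 1 le_rfl hn1]
  -- the gap δ
  have hne : (Finset.Icc 1 n).Nonempty := by
    exact ⟨1, by simp only [Finset.mem_Icc]; omega⟩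
  set g : ℕ → ℝ := fun i => if a i < b i then b i - a i else p with hg_def
  set δ : ℝ := min p ((Finset.Icc 1 n).inf' hne g) with hδ_def
  have hδ_pos : 0 < δ := by
    rw [hδ_def]
    apply lt_min hp_pos
    rw [Finset.lt_inf'_iff]
    intro i hi
    rw [Finset.mem_Icc] at hi
    rw [hg_def]
    by_cases h : a i < b i
    · simp only [if_pos h]; linarith
    · simp only [if_neg h]; exact hp_pos
  have hδ_le_p : δ ≤ p := min_le_left _ _
  have hδ_le : ∀ i, 1 ≤ i → i ≤ n → a i < b i → δ ≤ b i - a i := by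
    intro i h1 h2 hab
    have : (Finset.Icc 1 n).inf' hne g ≤ g i := Finset.inf'_le g (by simp [Finset.mem_Icc, h1, h2])
    rw [hg_def] at this
    simp only [if_pos hab] at this
    exact (min_le_right _ _).trans this
  have hbδ_pos : ∀ i, 1 ≤ i → i ≤ n → 0 < b i - δ := by
    intro i h1 h2; have := hp_lt_b i h1 h2; linarith
  -- the slopes
  set c : ℕ → ℝ := fun i => (f i (b i) - f i (b i - δ)) / (b i - (b i - δ)) with hc_def
  have hc_nonpos : ∀ i, 1 ≤ i → i ≤ n → c i ≤ 0 := by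
    intro i h1 h2
    rw [hc_def]
    apply div_nonpos_of_nonpos_of_nonneg
    · have := hf_anti i h1 h2 (b i - δ) (b i) (hbδ_pos i h1 h2) (by linarith)
      linarith
    · linarith
  -- c is nondecreasing
  have hc_mono : ∀ i, 1 ≤ i → i + 1 ≤ n → c i ≤ c (i + 1) := by
    intro i h1 h2
    have hin : i ≤ n := by omega
    have hbd := hbδ_pos i h1 hin
    have hbd' := hbδ_pos (i+1) (by omega) h2
    have hbb : b i ≤ b (i + 1) := hb_mono i h1 h2
    have hd := hdiff (i+1) (by omega) h2 (b i - δ) (b i) hbd (by linarith)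
    simp only [Nat.add_sub_cancel] at hd
    have step1 : c i ≤ (f (i+1) (b i) - f (i+1) (b i - δ)) / (b i - (b i - δ)) := by
      rw [hc_def]
      rw [div_le_div_iff_of_pos_right (by linarith : (0:ℝ) < b i - (b i - δ))]
      linarith
    have step2 : (f (i+1) (b i) - f (i+1) (b i - δ)) / (b i - (b i - δ)) ≤ c (i+1) := by
      rw [hc_def]
      exact slope_mono_aux (hf_conv (i+1) (by omega) h2) hbd hbd'
        (by linarith) (by linarith) (by linarith) hbb
    exact step1.trans step2
  -- per-term subgradient inequality
  have hterm : ∀ i ∈ Finset.Icc 1 n, f i (b i) - f i (a i) ≤ c i * (b i - a i) := by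
    intro i hi
    rw [Finset.mem_Icc] at hi
    obtain ⟨h1, h2⟩ := hi
    have hconv := hf_conv i h1 h2
    have hbd := hbδ_pos i h1 h2
    have hap := ha_pos i h1 h2
    rcases lt_trichotomy (a i) (b i) with hlt | heq | hgt
    · -- a i < b i : slope(a,b) ≤ c i
      have hgap := hδ_le i h1 h2 hlt
      have hs : (f i (b i) - f i (a i)) / (b i - a i) ≤ c i := by
        rw [hc_def]
        exact slope_mono_aux hconv hap hbd hlt (by linarith) (by linarith) le_rfl
      have := (div_le_iff₀ (by linarith : (0:ℝ) < b i - a i)).mp hs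
      linarith
    · rw [heq]; simp
    · -- b i < a i : c i ≤ slope(b,a)
      have hs : c i ≤ (f i (a i) - f i (b i)) / (a i - b i) := by
        rw [hc_def]
        exact slope_mono_aux hconv hbd (hb_pos i h1 h2) (by linarith) hgt
          (by linarith) (by linarith)
      have := (le_div_iff₀ (by linarith : (0:ℝ) < a i - b i)).mp hs
      nlinarith
  -- combine
  have hstep : ∑ i ∈ Finset.Icc 1 n, f i (b i) - ∑ i ∈ Finset.Icc 1 n, f i (a i)
      ≤ ∑ i ∈ Finset.Icc 1 n, c i * (b i - a i) := by
    rw [← Finset.sum_sub_distrib]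
    exact Finset.sum_le_sum hterm
  have habel := abel_aux c (fun i => b i - a i) n hn1 hc_mono (by
    intro k hk1 hk2
    rw [Finset.sum_sub_distrib]
    have := hsum k hk1 hk2
    linarith)
  have hfinal : c n * ∑ i ∈ Finset.Icc 1 n, (b i - a i) ≤ 0 := by
    apply mul_nonpos_of_nonpos_of_nonneg (hc_nonpos n hn1 le_rfl)
    rw [Finset.sum_sub_distrib]
    have := hsum n hn1 le_rfl
    linarith
  linarith
end

section
/- Let I be an interval of ℝ and φ₀, φ₁ : I → I strictly increasing contractive maps with unique fixed points y₁ < y₀ (fixed points of φ₁ and φ₀ respectively). If w is a finite binary word containing at least one 0 and at least one 1, then the unique fixed point y_w of the composition φ_w satisfies y₁ < y_w < y₀. -/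
/-- `comp φ w` is the composition `φ_w`, applying the map for the first letter of `w`
first (`false` = letter 0, `true` = letter 1). -/
def comp (φ : Bool → ℝ → ℝ) (w : List Bool) : ℝ → ℝ :=
  w.foldl (fun g a => φ a ∘ g) id

lemma foldl_apply (φ : Bool → ℝ → ℝ) :
    ∀ (w : List Bool) (g : ℝ → ℝ) (x : ℝ),
      w.foldl (fun g a => φ a ∘ g) g x = comp φ w (g x) := by
  intro w
  induction w with
  | nil => intro g x; simp [comp]
  | cons a w ih =>
    intro g x
    simp only [List.foldl_cons, comp]
    rw [ih, ih (φ a ∘ id)]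
    rfl

lemma comp_cons (φ : Bool → ℝ → ℝ) (a : Bool) (w : List Bool) (x : ℝ) :
    comp φ (a :: w) x = comp φ w (φ a x) := by
  have : comp φ (a :: w) x = List.foldl (fun g a => φ a ∘ g) (φ a ∘ id) w x := rfl
  rw [this, foldl_apply]
  rfl

lemma comp_mem (φ : Bool → ℝ → ℝ) (I : Set ℝ) (hmaps : ∀ a, Set.MapsTo (φ a) I I) :
    ∀ (w : List Bool) (x : ℝ), x ∈ I → comp φ w x ∈ I := by
  intro w
  induction w with
  | nil => intro x hx; simpa [comp] using hx
  | cons a w ih => intro x hx; rw [comp_cons]; exact ih _ (hmaps a hx)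

/-- Under Assumption A1 (strictly increasing contractive maps `φ₀, φ₁`
on an interval `I` with unique fixed points `y₁ < y₀`), if the finite word `w` contains
at least one `0` and at least one `1`, then any fixed point `y_w ∈ I` of `φ_w`
satisfies `y₁ < y_w < y₀`. -/
theorem stmt_8 (I : Set ℝ) (hI : I.OrdConnected) (φ : Bool → ℝ → ℝ)
    (hmaps : ∀ a, Set.MapsTo (φ a) I I)
    (hinc : ∀ a, ∀ x ∈ I, ∀ y ∈ I, x < y → φ a x < φ a y)
    (hcontr : ∀ a, ∀ x ∈ I, ∀ y ∈ I, x < y → φ a y - φ a x < y - x)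
    (y0 y1 : ℝ) (hy0I : y0 ∈ I) (hy1I : y1 ∈ I)
    (hfix0 : φ false y0 = y0) (huniq0 : ∀ z ∈ I, φ false z = z → z = y0)
    (hfix1 : φ true y1 = y1) (huniq1 : ∀ z ∈ I, φ true z = z → z = y1)
    (hlt : y1 < y0)
    (w : List Bool) (h0 : false ∈ w) (h1 : true ∈ w)
    (yw : ℝ) (hywI : yw ∈ I) (hfixw : comp φ w yw = yw) :
    y1 < yw ∧ yw < y0 := by
  -- weak monotonicity
  have hmono : ∀ a, ∀ x ∈ I, ∀ y ∈ I, x ≤ y → φ a x ≤ φ a y := by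
    intro a x hx y hy hxy
    rcases hxy.lt_or_eq with h | h
    · exact (hinc a x hx y hy h).le
    · rw [h]
  -- below both fixed points, maps move points up
  have hup : ∀ a, ∀ x ∈ I, x ≤ y1 → x < y0 → x ≤ φ a x := by
    intro a x hx hx1 hx0
    cases a with
    | false =>
      have := hcontr false x hx y0 hy0I hx0
      rw [hfix0] at this; linarith
    | true =>
      rcases hx1.lt_or_eq with h | h
      · have := hcontr true x hx y1 hy1I h
        rw [hfix1] at this; linarith
      · subst h; rw [hfix1]
  have hupf : ∀ x ∈ I, x ≤ y1 → x < y0 → x < φ false x := by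
    intro x hx hx1 hx0
    have := hcontr false x hx y0 hy0I hx0
    rw [hfix0] at this; linarith
  -- above both fixed points, maps move points down
  have hdn : ∀ a, ∀ x ∈ I, y0 ≤ x → y1 < x → φ a x ≤ x := by
    intro a x hx hx0 hx1
    cases a with
    | true =>
      have := hcontr true y1 hy1I x hx hx1
      rw [hfix1] at this; linarith
    | false =>
      rcases hx0.lt_or_eq with h | h
      · have := hcontr false y0 hy0I x hx h
        rw [hfix0] at this; linarith
      · rw [← h, hfix0]
  have hdnt : ∀ x ∈ I, y0 ≤ x → y1 < x → φ true x < x := by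
    intro x hx hx0 hx1
    have := hcontr true y1 hy1I x hx hx1
    rw [hfix1] at this; linarith
  constructor
  · by_contra h
    push_neg at h
    -- yw ≤ y1 < y0
    have key : ∀ (u : List Bool) (v : ℝ), v ∈ I → yw ≤ v →
        yw ≤ comp φ u v ∧ ((yw < v ∨ false ∈ u) → yw < comp φ u v) := by
      intro u
      induction u with
      | nil =>
        intro v hv hvw
        simp only [comp, List.foldl_nil, id]
        refine ⟨hvw, ?_⟩
        rintro (h' | h')
        · exact h'
        · simp at h'
      | cons a u ih =>
        intro v hv hvw
        rw [comp_cons]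
        have hφvI : φ a v ∈ I := hmaps a hv
        have h1' : yw ≤ φ a yw := hup a yw hywI h (lt_of_le_of_lt h hlt)
        have h2' : φ a yw ≤ φ a v := hmono a yw hywI v hv hvw
        have hle : yw ≤ φ a v := h1'.trans h2'
        refine ⟨(ih (φ a v) hφvI hle).1, ?_⟩
        rintro (h' | h')
        · have : yw < φ a v := lt_of_le_of_lt h1' (hinc a yw hywI v hv h')
          exact (ih (φ a v) hφvI this.le).2 (Or.inl this)
        · rcases List.mem_cons.1 h' with h'' | h''
          · -- a = false
            have hstrict : yw < φ a v := by
              have := hupf yw hywI h (lt_of_le_of_lt h hlt)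
              rw [h''] at this
              exact lt_of_lt_of_le this h2'
            exact (ih (φ a v) hφvI hstrict.le).2 (Or.inl hstrict)
          · exact (ih (φ a v) hφvI hle).2 (Or.inr h'')
    have := (key w yw hywI le_rfl).2 (Or.inr h0)
    rw [hfixw] at this
    exact lt_irrefl _ this
  · by_contra h
    push_neg at h
    -- y0 ≤ yw, so y1 < yw
    have hy1w : y1 < yw := lt_of_lt_of_le hlt h
    have key : ∀ (u : List Bool) (v : ℝ), v ∈ I → v ≤ yw →
        comp φ u v ≤ yw ∧ ((v < yw ∨ true ∈ u) → comp φ u v < yw) := by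
      intro u
      induction u with
      | nil =>
        intro v hv hvw
        simp only [comp, List.foldl_nil, id]
        refine ⟨hvw, ?_⟩
        rintro (h' | h')
        · exact h'
        · simp at h'
      | cons a u ih =>
        intro v hv hvw
        rw [comp_cons]
        have hφvI : φ a v ∈ I := hmaps a hv
        have h1' : φ a yw ≤ yw := hdn a yw hywI h hy1w
        have h2' : φ a v ≤ φ a yw := hmono a v hv yw hywI hvw
        have hle : φ a v ≤ yw := h2'.trans h1'
        refine ⟨(ih (φ a v) hφvI hle).1, ?_⟩
        rintro (h' | h')
        · have : φ a v < yw := lt_of_lt_of_le (hinc a v hv yw hywI h') h1'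
          exact (ih (φ a v) hφvI this.le).2 (Or.inl this)
        · rcases List.mem_cons.1 h' with h'' | h''
          · have hstrict : φ a v < yw := by
              have := hdnt yw hywI h hy1w
              rw [h''] at this
              exact lt_of_le_of_lt h2' this
            exact (ih (φ a v) hφvI hstrict.le).2 (Or.inl hstrict)
          · exact (ih (φ a v) hφvI hle).2 (Or.inr h'')
    have := (key w yw hywI le_rfl).2 (Or.inr h1)
    rw [hfixw] at this
    exact lt_irrefl _ this
end

section
/- Let I be an interval of ℝ and φ₀, φ₁ : I → I strictly increasing contractive maps with fixed points y₁ < y₀. Then for every x ∈ [y₁, y₀], φ₀₁(x) := φ₁(φ₀(x)) < φ₀(φ₁(x)) =: φ₁₀(x). -/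
/-- If `φ₀, φ₁ : I → I` are strictly increasing contractive maps on an
interval `I` with unique fixed points `y₁ < y₀` (of `φ₁` and `φ₀` respectively), then
for every `x ∈ [y₁, y₀]` one has `φ₀₁(x) = φ₁(φ₀(x)) < φ₀(φ₁(x)) = φ₁₀(x)`. -/
theorem stmt_10 (I : Set ℝ) (hI : I.OrdConnected) (φ0 φ1 : ℝ → ℝ)
    (h0maps : Set.MapsTo φ0 I I) (h1maps : Set.MapsTo φ1 I I)
    (h0inc : ∀ x ∈ I, ∀ y ∈ I, x < y → φ0 x < φ0 y)
    (h1inc : ∀ x ∈ I, ∀ y ∈ I, x < y → φ1 x < φ1 y)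
    (h0contr : ∀ x ∈ I, ∀ y ∈ I, x < y → φ0 y - φ0 x < y - x)
    (h1contr : ∀ x ∈ I, ∀ y ∈ I, x < y → φ1 y - φ1 x < y - x)
    (y0 y1 : ℝ) (hy0I : y0 ∈ I) (hy1I : y1 ∈ I)
    (hfix0 : φ0 y0 = y0) (huniq0 : ∀ z ∈ I, φ0 z = z → z = y0)
    (hfix1 : φ1 y1 = y1) (huniq1 : ∀ z ∈ I, φ1 z = z → z = y1)
    (hlt : y1 < y0)
    (x : ℝ) (hx : x ∈ Set.Icc y1 y0) :
    φ1 (φ0 x) < φ0 (φ1 x) := by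
  have hxI : x ∈ I := hI.out hy1I hy0I hx
  have h0xI : φ0 x ∈ I := h0maps hxI
  have h1xI : φ1 x ∈ I := h1maps hxI
  -- helper facts
  have hA : ∀ z ∈ I, y1 < z → φ1 z < z := by
    intro z hz hyz
    have := h1contr y1 hy1I z hz hyz
    linarith [hfix1]
  have hB : ∀ z ∈ I, z < y0 → z < φ0 z := by
    intro z hz hzy
    have := h0contr z hz y0 hy0I hzy
    linarith [hfix0]
  rcases eq_or_lt_of_le hx.1 with h1eq | h1lt
  · -- x = y1
    have hfx : φ1 x = x := by rw [← h1eq, hfix1]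
    rw [hfx]
    have hx0 : x < φ0 x := hB x hxI (by rw [← h1eq]; exact hlt)
    exact hA (φ0 x) h0xI (by rw [h1eq]; exact hx0)
  · rcases eq_or_lt_of_le hx.2 with h0eq | h0lt
    · -- x = y0
      have hfx : φ0 x = x := by rw [h0eq, hfix0]
      rw [hfx]
      exact hB (φ1 x) h1xI (lt_of_lt_of_le (hA x hxI h1lt) hx.2)
    · have hb : φ1 x < x := hA x hxI h1lt
      have ha : x < φ0 x := hB x hxI h0lt
      have c1 := h1contr x hxI (φ0 x) h0xI ha
      have c2 := h0contr (φ1 x) h1xI x hxI hb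
      linarith
end

section
/- Let I be an interval of ℝ and φ₀, φ₁ : I → I strictly increasing contractive maps with fixed points y₁ < y₀. Fix x ∈ [y₁, y₀] and define the x-threshold orbit by x_1 = φ₁(x), and x_{k+1} = φ₁(x_k) if x_k ≥ x, x_{k+1} = φ₀(x_k) if x_k < x. Then for all k ∈ ℕ: φ₁(x) ≤ x_k < φ₀(x). -/
/-- Under Assumption A1, fix `x ∈ [y₁, y₀]` and let `(X k)_{k≥1}` be the
`x`-threshold orbit: `X 1 = φ₁ x`, and `X (k+1) = φ₁ (X k)` if `X k ≥ x`, else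
`X (k+1) = φ₀ (X k)`.  Then for all `k ≥ 1`: `φ₁ x ≤ X k < φ₀ x`. -/
theorem stmt_11 (I : Set ℝ) (hI : I.OrdConnected) (φ0 φ1 : ℝ → ℝ)
    (h0maps : Set.MapsTo φ0 I I) (h1maps : Set.MapsTo φ1 I I)
    (h0inc : ∀ x ∈ I, ∀ y ∈ I, x < y → φ0 x < φ0 y)
    (h1inc : ∀ x ∈ I, ∀ y ∈ I, x < y → φ1 x < φ1 y)
    (h0contr : ∀ x ∈ I, ∀ y ∈ I, x < y → φ0 y - φ0 x < y - x)
    (h1contr : ∀ x ∈ I, ∀ y ∈ I, x < y → φ1 y - φ1 x < y - x)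
    (y0 y1 : ℝ) (hy0I : y0 ∈ I) (hy1I : y1 ∈ I)
    (hfix0 : φ0 y0 = y0) (huniq0 : ∀ z ∈ I, φ0 z = z → z = y0)
    (hfix1 : φ1 y1 = y1) (huniq1 : ∀ z ∈ I, φ1 z = z → z = y1)
    (hlt : y1 < y0)
    (x : ℝ) (hx : x ∈ Set.Icc y1 y0)
    (X : ℕ → ℝ) (hX1 : X 1 = φ1 x)
    (hXs : ∀ k, 1 ≤ k → X (k + 1) = if x ≤ X k then φ1 (X k) else φ0 (X k)) :
    ∀ k, 1 ≤ k → φ1 x ≤ X k ∧ X k < φ0 x := by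
  obtain ⟨hy1x, hxy0⟩ := hx
  have hxI : x ∈ I := hI.out hy1I hy0I ⟨hy1x, hxy0⟩
  -- monotone lemmas (≤ versions)
  have h1mono : ∀ a ∈ I, ∀ b ∈ I, a ≤ b → φ1 a ≤ φ1 b := by
    intro a ha b hb hab
    rcases eq_or_lt_of_le hab with rfl | h
    · exact le_refl _
    · exact le_of_lt (h1inc a ha b hb h)
  have h0mono : ∀ a ∈ I, ∀ b ∈ I, a ≤ b → φ0 a ≤ φ0 b := by
    intro a ha b hb hab
    rcases eq_or_lt_of_le hab with rfl | h
    · exact le_refl _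
    · exact le_of_lt (h0inc a ha b hb h)
  -- for z ∈ I with y1 ≤ z, φ1 z ≤ z
  have h1le : ∀ z ∈ I, y1 ≤ z → φ1 z ≤ z := by
    intro z hz hzy
    rcases eq_or_lt_of_le hzy with rfl | h
    · exact le_of_eq hfix1
    · have := h1contr y1 hy1I z hz h
      rw [hfix1] at this; linarith
  -- for z ∈ I with z < y0, z < φ0 z
  have h0gt : ∀ z ∈ I, z < y0 → z < φ0 z := by
    intro z hz h
    have := h0contr z hz y0 hy0I h
    rw [hfix0] at this; linarith
  have hφ1x_ge : y1 ≤ φ1 x := by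
    calc y1 = φ1 y1 := hfix1.symm
    _ ≤ φ1 x := h1mono y1 hy1I x hxI hy1x
  have hφ0x_le : φ0 x ≤ y0 := by
    calc φ0 x ≤ φ0 y0 := h0mono x hxI y0 hy0I hxy0
    _ = y0 := hfix0
  have hφ1lt : φ1 x < φ0 x := by
    rcases eq_or_lt_of_le hxy0 with rfl | h
    · have h1 : φ1 x < x := by
        have := h1contr y1 hy1I x hxI hlt
        rw [hfix1] at this; linarith
      calc φ1 x < x := h1
      _ = φ0 x := hfix0.symm
    · calc φ1 x ≤ x := h1le x hxI hy1x
      _ < φ0 x := h0gt x hxI h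
  intro k hk
  induction k, hk using Nat.le_induction with
  | base => exact ⟨le_of_eq hX1.symm, hX1 ▸ hφ1lt⟩
  | succ n hn ih =>
    obtain ⟨ihl, ihr⟩ := ih
    have hXnI : X n ∈ I := hI.out hy1I hy0I ⟨le_trans hφ1x_ge ihl, le_of_lt (lt_of_lt_of_le ihr hφ0x_le)⟩
    rw [hXs n hn]
    by_cases hc : x ≤ X n
    · rw [if_pos hc]
      constructor
      · exact h1mono x hxI (X n) hXnI hc
      · calc φ1 (X n) ≤ X n := h1le (X n) hXnI (le_trans hy1x hc)
        _ < φ0 x := ihr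
    · rw [if_neg hc]
      push_neg at hc
      constructor
      · have : X n < φ0 (X n) := h0gt (X n) hXnI (lt_of_lt_of_le hc hxy0)
        linarith
      · exact h0inc (X n) hXnI x hxI hc
end

section
/- Let I be an interval of ℝ, φ₀, φ₁ : I → I strictly increasing contractive maps with fixed points y₁ < y₀. For x ∈ I let π(x) be the x-threshold word. Then: π(x) = 1 iff x ≤ y₁; π(x) = 01 iff x ∈ [y_{01}, y_{10}]; π(x) = 0 iff x ≥ y₀, where y_{01} and y_{10} are the unique fixed points of φ₁∘φ₀ and φ₀∘φ₁ respectively. -/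
def periodLetter (w : List Bool) (k : ℕ) : Bool :=
  w.getD ((k - 1) % w.length) false

def IsThresholdWord (φ0 φ1 : ℝ → ℝ) (X : ℕ → ℝ) (w : List Bool) : Prop :=
  w ≠ [] ∧
  (∀ k, 1 ≤ k → X (k + 1) = if periodLetter w k then φ1 (X k) else φ0 (X k)) ∧
  ∀ v : List Bool, v ≠ [] →
    (∀ k, 1 ≤ k → X (k + 1) = if periodLetter v k then φ1 (X k) else φ0 (X k)) →
    w.length ≤ v.length

lemma periodLetter_singleton (b : Bool) (k : ℕ) : periodLetter [b] k = b := by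
  simp [periodLetter, Nat.mod_one]

lemma periodLetter_pair_odd (k : ℕ) (h : (k - 1) % 2 = 0) :
    periodLetter [false, true] k = false := by
  simp [periodLetter, h]

lemma periodLetter_pair_even (k : ℕ) (h : (k - 1) % 2 = 1) :
    periodLetter [false, true] k = true := by
  simp [periodLetter, h]

open Filter Topology

lemma tendsto_of_mono_bdd (u : ℕ → ℝ) (hmono : Monotone u) (B : ℝ) (hB : ∀ k, u k ≤ B) :
    ∃ L, Tendsto u atTop (𝓝 L) ∧ (∀ k, u k ≤ L) ∧ L ≤ B := by
  have hbdd : BddAbove (Set.range u) := ⟨B, by rintro _ ⟨k, rfl⟩; exact hB k⟩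
  exact ⟨⨆ k, u k, tendsto_atTop_ciSup hmono hbdd, fun k => le_ciSup hbdd k, ciSup_le hB⟩

lemma tendsto_of_anti_bdd (u : ℕ → ℝ) (hanti : Antitone u) (B : ℝ) (hB : ∀ k, B ≤ u k) :
    ∃ L, Tendsto u atTop (𝓝 L) ∧ (∀ k, L ≤ u k) ∧ B ≤ L := by
  have hbdd : BddBelow (Set.range u) := ⟨B, by rintro _ ⟨k, rfl⟩; exact hB k⟩
  exact ⟨⨅ k, u k, tendsto_atTop_ciInf hanti hbdd, fun k => ciInf_le hbdd k, le_ciInf hB⟩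

lemma fix_of_orbit (I : Set ℝ) (ψ : ℝ → ℝ)
    (hlip : ∀ a ∈ I, ∀ b ∈ I, |ψ a - ψ b| ≤ |a - b|)
    (u : ℕ → ℝ) (hu : ∀ k, u k ∈ I) (L : ℝ) (hL : L ∈ I)
    (hstep : ∀ k, u (k + 1) = ψ (u k))
    (htend : Tendsto u atTop (𝓝 L)) : ψ L = L := by
  have hd : Tendsto (fun k => |u k - L|) atTop (𝓝 0) := by
    have h := (htend.sub (tendsto_const_nhds (x := L))).abs
    simpa using h
  have h1 : Tendsto (fun k => |ψ (u k) - ψ L|) atTop (𝓝 0) :=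
    squeeze_zero (fun k => abs_nonneg _) (fun k => hlip _ (hu k) _ hL) hd
  have h2 : Tendsto (fun k => ψ (u k)) atTop (𝓝 (ψ L)) := by
    rw [tendsto_iff_dist_tendsto_zero]
    simpa [Real.dist_eq] using h1
  have h3 : Tendsto (fun k => ψ (u k)) atTop (𝓝 L) := by
    have h4 : (fun k => u (k + 1)) = fun k => ψ (u k) := funext hstep
    rw [← h4]
    exact htend.comp (tendsto_add_atTop_nat 1)
  exact tendsto_nhds_unique h2 h3

/-- Under Assumption A1, with `y₀₁, y₁₀` the unique fixed points of
`φ₁∘φ₀` and `φ₀∘φ₁` respectively, and `X` the `x`-threshold orbit: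
`π(x) = 1` iff `x ≤ y₁`; `π(x) = 01` iff `x ∈ [y₀₁, y₁₀]`; `π(x) = 0` iff `x ≥ y₀`. -/
theorem stmt_12 (I : Set ℝ) (hI : I.OrdConnected) (φ0 φ1 : ℝ → ℝ)
    (h0maps : Set.MapsTo φ0 I I) (h1maps : Set.MapsTo φ1 I I)
    (h0inc : ∀ x ∈ I, ∀ y ∈ I, x < y → φ0 x < φ0 y)
    (h1inc : ∀ x ∈ I, ∀ y ∈ I, x < y → φ1 x < φ1 y)
    (h0contr : ∀ x ∈ I, ∀ y ∈ I, x < y → φ0 y - φ0 x < y - x)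
    (h1contr : ∀ x ∈ I, ∀ y ∈ I, x < y → φ1 y - φ1 x < y - x)
    (y0 y1 : ℝ) (hy0I : y0 ∈ I) (hy1I : y1 ∈ I)
    (hfix0 : φ0 y0 = y0) (huniq0 : ∀ z ∈ I, φ0 z = z → z = y0)
    (hfix1 : φ1 y1 = y1) (huniq1 : ∀ z ∈ I, φ1 z = z → z = y1)
    (hlt : y1 < y0)
    (y01 y10 : ℝ) (hy01I : y01 ∈ I) (hy10I : y10 ∈ I)
    (hfix01 : φ1 (φ0 y01) = y01) (huniq01 : ∀ z ∈ I, φ1 (φ0 z) = z → z = y01)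
    (hfix10 : φ0 (φ1 y10) = y10) (huniq10 : ∀ z ∈ I, φ0 (φ1 z) = z → z = y10)
    (x : ℝ) (hx : x ∈ I)
    (X : ℕ → ℝ) (hX1 : X 1 = φ1 x)
    (hXs : ∀ k, 1 ≤ k → X (k + 1) = if x ≤ X k then φ1 (X k) else φ0 (X k)) :
    (IsThresholdWord φ0 φ1 X [true] ↔ x ≤ y1) ∧
    (IsThresholdWord φ0 φ1 X [false, true] ↔ x ∈ Set.Icc y01 y10) ∧
    (IsThresholdWord φ0 φ1 X [false] ↔ y0 ≤ x) := by
  -- monotonicity (non-strict)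
  have m0 : ∀ a ∈ I, ∀ b ∈ I, a ≤ b → φ0 a ≤ φ0 b := by
    intro a ha b hb hab
    rcases hab.eq_or_lt with rfl | h
    · exact le_rfl
    · exact (h0inc a ha b hb h).le
  have m1 : ∀ a ∈ I, ∀ b ∈ I, a ≤ b → φ1 a ≤ φ1 b := by
    intro a ha b hb hab
    rcases hab.eq_or_lt with rfl | h
    · exact le_rfl
    · exact (h1inc a ha b hb h).le
  -- injectivity
  have inj0 : ∀ a ∈ I, ∀ b ∈ I, φ0 a = φ0 b → a = b := by
    intro a ha b hb h
    rcases lt_trichotomy a b with h' | h' | h'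
    · exact absurd h (h0inc a ha b hb h').ne
    · exact h'
    · exact absurd h (h0inc b hb a ha h').ne'
  have inj1 : ∀ a ∈ I, ∀ b ∈ I, φ1 a = φ1 b → a = b := by
    intro a ha b hb h
    rcases lt_trichotomy a b with h' | h' | h'
    · exact absurd h (h1inc a ha b hb h').ne
    · exact h'
    · exact absurd h (h1inc b hb a ha h').ne'
  -- sign lemmas
  have s0lt : ∀ z ∈ I, z < y0 → z < φ0 z := by
    intro z hz h
    have h2 := h0contr z hz y0 hy0I h
    rw [hfix0] at h2; linarith
  have s0gt : ∀ z ∈ I, y0 < z → φ0 z < z := by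
    intro z hz h
    have h2 := h0contr y0 hy0I z hz h
    rw [hfix0] at h2; linarith
  have s1lt : ∀ z ∈ I, z < y1 → z < φ1 z := by
    intro z hz h
    have h2 := h1contr z hz y1 hy1I h
    rw [hfix1] at h2; linarith
  have s1gt : ∀ z ∈ I, y1 < z → φ1 z < z := by
    intro z hz h
    have h2 := h1contr y1 hy1I z hz h
    rw [hfix1] at h2; linarith
  -- contraction for compositions
  have hcg : ∀ a ∈ I, ∀ b ∈ I, a < b → φ1 (φ0 b) - φ1 (φ0 a) < b - a := by
    intro a ha b hb hab
    have h1 : φ0 a < φ0 b := h0inc a ha b hb hab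
    have h2 := h1contr (φ0 a) (h0maps ha) (φ0 b) (h0maps hb) h1
    have h3 := h0contr a ha b hb hab
    linarith
  have hch : ∀ a ∈ I, ∀ b ∈ I, a < b → φ0 (φ1 b) - φ0 (φ1 a) < b - a := by
    intro a ha b hb hab
    have h1 : φ1 a < φ1 b := h1inc a ha b hb hab
    have h2 := h0contr (φ1 a) (h1maps ha) (φ1 b) (h1maps hb) h1
    have h3 := h1contr a ha b hb hab
    linarith
  have sglt : ∀ z ∈ I, z < y01 → z < φ1 (φ0 z) := by
    intro z hz h
    have h2 := hcg z hz y01 hy01I h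
    rw [hfix01] at h2; linarith
  have sggt : ∀ z ∈ I, y01 < z → φ1 (φ0 z) < z := by
    intro z hz h
    have h2 := hcg y01 hy01I z hz h
    rw [hfix01] at h2; linarith
  have shlt : ∀ z ∈ I, z < y10 → z < φ0 (φ1 z) := by
    intro z hz h
    have h2 := hch z hz y10 hy10I h
    rw [hfix10] at h2; linarith
  have shgt : ∀ z ∈ I, y10 < z → φ0 (φ1 z) < z := by
    intro z hz h
    have h2 := hch y10 hy10I z hz h
    rw [hfix10] at h2; linarith
  -- Lipschitz bounds
  have lip0 : ∀ a ∈ I, ∀ b ∈ I, |φ0 a - φ0 b| ≤ |a - b| := by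
    intro a ha b hb
    rcases lt_trichotomy a b with h | rfl | h
    · have h1 := h0inc a ha b hb h
      have h2 := h0contr a ha b hb h
      rw [abs_sub_comm, abs_of_pos (by linarith), abs_sub_comm a, abs_of_pos (by linarith)]
      linarith
    · simp
    · have h1 := h0inc b hb a ha h
      have h2 := h0contr b hb a ha h
      rw [abs_of_pos (by linarith), abs_of_pos (by linarith)]
      linarith
  have lip1 : ∀ a ∈ I, ∀ b ∈ I, |φ1 a - φ1 b| ≤ |a - b| := by
    intro a ha b hb
    rcases lt_trichotomy a b with h | rfl | h
    · have h1 := h1inc a ha b hb h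
      have h2 := h1contr a ha b hb h
      rw [abs_sub_comm, abs_of_pos (by linarith), abs_sub_comm a, abs_of_pos (by linarith)]
      linarith
    · simp
    · have h1 := h1inc b hb a ha h
      have h2 := h1contr b hb a ha h
      rw [abs_of_pos (by linarith), abs_of_pos (by linarith)]
      linarith
  have lipg : ∀ a ∈ I, ∀ b ∈ I, |φ1 (φ0 a) - φ1 (φ0 b)| ≤ |a - b| := by
    intro a ha b hb
    exact (lip1 _ (h0maps ha) _ (h0maps hb)).trans (lip0 a ha b hb)
  -- the key derived fixed-point relations
  have y10eq : φ0 y01 = y10 := by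
    refine huniq10 (φ0 y01) (h0maps hy01I) ?_
    rw [hfix01]
  have y01eq : φ1 y10 = y01 := by rw [← y10eq]; exact hfix01
  -- orderings
  have hy1y01 : y1 < y01 := by
    have hgy1 : y1 < φ1 (φ0 y1) :=
      calc y1 = φ1 y1 := hfix1.symm
        _ < φ1 (φ0 y1) := h1inc y1 hy1I _ (h0maps hy1I) (s0lt y1 hy1I hlt)
    rcases lt_trichotomy y1 y01 with h | h | h
    · exact h
    · exfalso; rw [h, hfix01] at hgy1; exact lt_irrefl _ hgy1
    · exfalso; have := sggt y1 hy1I h; linarith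
  have hy01y0 : y01 < y0 := by
    have hgy0 : φ1 (φ0 y0) < y0 := by rw [hfix0]; exact s1gt y0 hy0I hlt
    rcases lt_trichotomy y01 y0 with h | h | h
    · exact h
    · exfalso; rw [← h, hfix01] at hgy0; exact lt_irrefl _ hgy0
    · exfalso; have := sglt y0 hy0I h; linarith
  have hy01y10 : y01 < y10 := by
    rw [← y10eq]; exact s0lt y01 hy01I hy01y0
  have hy10y0 : y10 < y0 := by
    rw [← y10eq]
    calc φ0 y01 < φ0 y0 := h0inc _ hy01I _ hy0I hy01y0
      _ = y0 := hfix0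
  -- orbit stays in I
  have hmem : ∀ k, 1 ≤ k → X k ∈ I := by
    intro k hk
    induction k, hk using Nat.le_induction with
    | base => rw [hX1]; exact h1maps hx
    | succ n hn ih =>
      rw [hXs n hn]
      split
      · exact h1maps ih
      · exact h0maps ih
  have hX1I : X 1 ∈ I := hmem 1 le_rfl
  -- constructors / destructors for singleton words
  have mk_true : (∀ k, 1 ≤ k → X (k + 1) = φ1 (X k)) → IsThresholdWord φ0 φ1 X [true] := by
    intro h
    refine ⟨by simp, fun k hk => ?_, fun v hv _ => ?_⟩
    · rw [periodLetter_singleton]; simpa using h k hk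
    · exact List.length_pos_iff.mpr hv
  have mk_false : (∀ k, 1 ≤ k → X (k + 1) = φ0 (X k)) → IsThresholdWord φ0 φ1 X [false] := by
    intro h
    refine ⟨by simp, fun k hk => ?_, fun v hv _ => ?_⟩
    · rw [periodLetter_singleton]; simpa using h k hk
    · exact List.length_pos_iff.mpr hv
  have dest_true : IsThresholdWord φ0 φ1 X [true] → ∀ k, 1 ≤ k → X (k + 1) = φ1 (X k) := by
    rintro ⟨-, h, -⟩ k hk
    have h2 := h k hk
    rw [periodLetter_singleton] at h2
    simpa using h2
  have dest_false : IsThresholdWord φ0 φ1 X [false] → ∀ k, 1 ≤ k → X (k + 1) = φ0 (X k) := by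
    rintro ⟨-, h, -⟩ k hk
    have h2 := h k hk
    rw [periodLetter_singleton] at h2
    simpa using h2
  -- both all-φ0 and all-φ1 step equations together are impossible
  have hboth : (∀ k, 1 ≤ k → X (k + 1) = φ0 (X k)) →
      (∀ k, 1 ≤ k → X (k + 1) = φ1 (X k)) → False := by
    intro hc0 hc1
    set u : ℕ → ℝ := fun n => X (n + 1) with hu
    have hust0 : ∀ n, u (n + 1) = φ0 (u n) := fun n => hc0 (n + 1) (by omega)
    have hust1 : ∀ n, u (n + 1) = φ1 (u n) := fun n => hc1 (n + 1) (by omega)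
    have humem : ∀ n, u n ∈ I := fun n => hmem (n + 1) (by omega)
    rcases lt_trichotomy (u 0) y0 with h | h | h
    · have hb : ∀ n, u n < y0 := by
        intro n
        induction n with
        | zero => exact h
        | succ m ih =>
          rw [hust0 m]
          calc φ0 (u m) < φ0 y0 := h0inc _ (humem m) _ hy0I ih
            _ = y0 := hfix0
      have hmono : Monotone u := monotone_nat_of_le_succ fun n => by
        rw [hust0 n]; exact (s0lt _ (humem n) (hb n)).le
      obtain ⟨L, hLt, hLle, hLB⟩ := tendsto_of_mono_bdd u hmono y0 (fun k => (hb k).le)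
      have hLI : L ∈ I := hI.out (humem 0) hy0I ⟨hLle 0, hLB⟩
      have hf0 : φ0 L = L := fix_of_orbit I φ0 lip0 u humem L hLI hust0 hLt
      have hf1 : φ1 L = L := fix_of_orbit I φ1 lip1 u humem L hLI hust1 hLt
      have e0 := huniq0 L hLI hf0
      have e1 := huniq1 L hLI hf1
      linarith [e0 ▸ e1 ▸ hlt]
    · have e0 : u 1 = y0 := by rw [hust0 0, h, hfix0]
      have e1 : u 1 = φ1 y0 := by rw [hust1 0, h]
      have := s1gt y0 hy0I hlt
      linarith [e0 ▸ e1]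
    · have hb : ∀ n, y0 < u n := by
        intro n
        induction n with
        | zero => exact h
        | succ m ih =>
          rw [hust0 m]
          calc y0 = φ0 y0 := hfix0.symm
            _ < φ0 (u m) := h0inc _ hy0I _ (humem m) ih
      have hanti : Antitone u := antitone_nat_of_succ_le fun n => by
        rw [hust0 n]; exact (s0gt _ (humem n) (hb n)).le
      obtain ⟨L, hLt, hLle, hLB⟩ := tendsto_of_anti_bdd u hanti y0 (fun k => (hb k).le)
      have hLI : L ∈ I := hI.out hy0I (humem 0) ⟨hLB, hLle 0⟩
      have hf0 : φ0 L = L := fix_of_orbit I φ0 lip0 u humem L hLI hust0 hLt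
      have hf1 : φ1 L = L := fix_of_orbit I φ1 lip1 u humem L hLI hust1 hLt
      have e0 := huniq0 L hLI hf0
      have e1 := huniq1 L hLI hf1
      linarith [e0 ▸ e1 ▸ hlt]
  -- orbit upper bound when x < y0
  have hub : x < y0 → ∀ k, 1 ≤ k → X k < y0 := by
    intro hxy0 k hk
    induction k, hk using Nat.le_induction with
    | base =>
      rw [hX1]
      calc φ1 x < φ1 y0 := h1inc x hx y0 hy0I hxy0
        _ < y0 := s1gt y0 hy0I hlt
    | succ n hn ih =>
      rw [hXs n hn]
      split
      · calc φ1 (X n) < φ1 y0 := h1inc _ (hmem n hn) _ hy0I ih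
          _ < y0 := s1gt y0 hy0I hlt
      · calc φ0 (X n) < φ0 y0 := h0inc _ (hmem n hn) _ hy0I ih
          _ = y0 := hfix0
  rcases le_or_gt x y1 with hA | hA
  · -- Region R1 : x ≤ y1, word is [true]
    have hphi1x : x ≤ φ1 x := by
      rcases hA.eq_or_lt with h | h
      · rw [h]; rw [hfix1]
      · exact (s1lt x hx h).le
    have inv1 : ∀ k, 1 ≤ k → x ≤ X k ∧ X k ≤ y1 := by
      intro k hk
      induction k, hk using Nat.le_induction with
      | base =>
        rw [hX1]
        refine ⟨hphi1x, ?_⟩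
        calc φ1 x ≤ φ1 y1 := m1 x hx y1 hy1I hA
          _ = y1 := hfix1
      | succ n hn ih =>
        rw [hXs n hn, if_pos ih.1]
        refine ⟨hphi1x.trans (m1 x hx _ (hmem n hn) ih.1), ?_⟩
        calc φ1 (X n) ≤ φ1 y1 := m1 _ (hmem n hn) _ hy1I ih.2
          _ = y1 := hfix1
    have condT : ∀ k, 1 ≤ k → X (k + 1) = φ1 (X k) := by
      intro k hk
      rw [hXs k hk, if_pos (inv1 k hk).1]
    refine ⟨iff_of_true (mk_true condT) hA, iff_of_false ?_ ?_, iff_of_false ?_ ?_⟩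
    · rintro ⟨-, -, hmin⟩
      have h2 := hmin [true] (by simp) (fun k hk => by
        rw [periodLetter_singleton]; simpa using condT k hk)
      simp at h2
    · rw [Set.mem_Icc]
      rintro ⟨h1, -⟩
      linarith
    · intro h
      exact hboth (dest_false h) condT
    · linarith
  · rcases lt_or_ge x y01 with hB | hB
    · -- Region R2 : y1 < x < y01, no short word
      have hxy0 : x < y0 := hB.trans hy01y0
      have hub2 : ∀ k, 1 ≤ k → X k < y0 := hub hxy0
      have hX1lt : X 1 < x := by rw [hX1]; exact s1gt x hx hA
      have hX1gt : y1 < X 1 := by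
        rw [hX1]
        calc y1 = φ1 y1 := hfix1.symm
          _ < φ1 x := h1inc _ hy1I _ hx hA
      have hX2 : X 2 = φ0 (X 1) := by
        have h2 := hXs 1 le_rfl
        rwa [if_neg (not_le.mpr hX1lt)] at h2
      have hX2gt : x < X 2 := by
        rw [hX2, hX1]; exact shlt x hx (hB.trans hy01y10)
      have hX3 : X 3 = φ1 (X 2) := by
        have h2 := hXs 2 (by omega)
        rwa [if_pos hX2gt.le] at h2
      have hnotT : ¬ ∀ k, 1 ≤ k → X (k + 1) = φ1 (X k) := by
        intro hc
        have h1 := hc 1 le_rfl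
        have h2 := s1gt _ hX1I hX1gt
        have h3 := s0lt _ hX1I (hub2 1 le_rfl)
        rw [hX2] at h1
        linarith
      have hnotF : ¬ ∀ k, 1 ≤ k → X (k + 1) = φ0 (X k) := by
        intro hc
        have h1 := hc 2 (by omega)
        have h2 := s1gt _ (hmem 2 (by omega)) (hA.trans hX2gt)
        have h3 := s0lt _ (hmem 2 (by omega)) (hub2 2 (by omega))
        rw [hX3] at h1
        linarith
      have hnot01 : ¬ ∀ k, 1 ≤ k →
          X (k + 1) = if periodLetter [false, true] k then φ1 (X k) else φ0 (X k) := by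
        intro hc
        have hodd : ∀ m : ℕ, X (2*m+2) = φ0 (X (2*m+1)) := by
          intro m
          have h2 := hc (2*m+1) (by omega)
          rw [periodLetter_pair_odd _ (by omega)] at h2
          have e : 2*m+1+1 = 2*m+2 := by omega
          rw [e] at h2
          simpa using h2
        have heven : ∀ m : ℕ, X (2*m+3) = φ1 (X (2*m+2)) := by
          intro m
          have h2 := hc (2*m+2) (by omega)
          rw [periodLetter_pair_even _ (by omega)] at h2
          have e : 2*m+2+1 = 2*m+3 := by omega
          rw [e] at h2
          simpa using h2
        by_cases hcase : ∀ m : ℕ, X (2*m+1) < x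
        · set u : ℕ → ℝ := fun m => X (2*m+1) with hudef
          have humem : ∀ m, u m ∈ I := fun m => hmem _ (by omega)
          have hust : ∀ m, u (m + 1) = φ1 (φ0 (u m)) := by
            intro m
            show X (2*(m+1)+1) = _
            have e : 2*(m+1)+1 = 2*m+3 := by omega
            rw [e, heven m, hodd m]
          have humono : Monotone u := monotone_nat_of_le_succ fun m => by
            rw [hust m]; exact (sglt _ (humem m) ((hcase m).trans hB)).le
          obtain ⟨L, hLt, hLle, hLB⟩ := tendsto_of_mono_bdd u humono x (fun m => (hcase m).le)
          have hLI : L ∈ I := hI.out (humem 0) hx ⟨hLle 0, hLB⟩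
          have hfixL : φ1 (φ0 L) = L :=
            fix_of_orbit I (fun z => φ1 (φ0 z)) lipg u humem L hLI hust hLt
          have hLy01 := huniq01 L hLI hfixL
          rw [hLy01] at hLB
          linarith
        · push_neg at hcase
          obtain ⟨m, hm⟩ := hcase
          have hmI : X (2*m+1) ∈ I := hmem _ (by omega)
          have hact : X (2*m+2) = φ1 (X (2*m+1)) := by
            have h2 := hXs (2*m+1) (by omega)
            rw [if_pos hm] at h2
            have e : 2*m+1+1 = 2*m+2 := by omega
            rwa [e] at h2
          have hword := hodd m
          have h1 := s1gt _ hmI (hA.trans_le hm)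
          have h2 := s0lt _ hmI (hub2 _ (by omega))
          rw [hact] at hword
          linarith
      refine ⟨iff_of_false (fun h => hnotT (dest_true h)) (not_le.mpr hA),
        iff_of_false ?_ ?_, iff_of_false (fun h => hnotF (dest_false h)) ?_⟩
      · rintro ⟨-, hc, -⟩; exact hnot01 hc
      · rw [Set.mem_Icc]; rintro ⟨h1, -⟩; linarith
      · linarith
    · rcases le_or_gt x y10 with hC | hC
      · -- Region R3 : y01 ≤ x ≤ y10, word is [false, true]
        have hy1x : y1 < x := hy1y01.trans_le hB
        have hxh : x ≤ φ0 (φ1 x) := by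
          rcases hC.eq_or_lt with h | h
          · rw [h, hfix10]
          · exact (shlt x hx h).le
        have hX1lt : X 1 < x := by rw [hX1]; exact s1gt x hx hy1x
        have hX1gt : y1 < X 1 := by
          rw [hX1]
          calc y1 = φ1 y1 := hfix1.symm
            _ < φ1 x := h1inc _ hy1I _ hx hy1x
        have hX1le : X 1 ≤ y01 := by
          rw [hX1, ← y01eq]; exact m1 x hx y10 hy10I hC
        have hX2 : X 2 = φ0 (X 1) := by
          have h2 := hXs 1 le_rfl
          rwa [if_neg (not_le.mpr hX1lt)] at h2
        have hX2ge : x ≤ X 2 := by rw [hX2, hX1]; exact hxh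
        have hX2le : X 2 ≤ y10 := by
          rw [hX2, ← y10eq]; exact m0 _ hX1I _ hy01I hX1le
        have hX3 : X 3 = φ1 (X 2) := by
          have h2 := hXs 2 (by omega)
          rwa [if_pos hX2ge] at h2
        have hnotT : ¬ ∀ k, 1 ≤ k → X (k + 1) = φ1 (X k) := by
          intro hc
          have h1 := hc 1 le_rfl
          have h2 := s1gt _ hX1I hX1gt
          have h3 := s0lt _ hX1I (hX1le.trans_lt hy01y0)
          rw [hX2] at h1
          linarith
        have hnotF : ¬ ∀ k, 1 ≤ k → X (k + 1) = φ0 (X k) := by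
          intro hc
          have h1 := hc 2 (by omega)
          have h2 := s1gt _ (hmem 2 (by omega)) (hy1x.trans_le hX2ge)
          have h3 := s0lt _ (hmem 2 (by omega)) (hX2le.trans_lt hy10y0)
          rw [hX3] at h1
          linarith
        have inv3 : ∀ m : ℕ,
            (φ1 x ≤ X (2*m+1) ∧ X (2*m+1) ≤ y01 ∧ X (2*m+1) < x) ∧
            (x ≤ X (2*m+2) ∧ X (2*m+2) ≤ y10 ∧ X (2*m+2) = φ0 (X (2*m+1))) := by
          intro m
          induction m with
          | zero =>
            have e1 : 2*0+1 = 1 := by norm_num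
            have e2 : 2*0+2 = 2 := by norm_num
            rw [e1, e2]
            exact ⟨⟨le_of_eq hX1.symm, hX1le, hX1lt⟩, hX2ge, hX2le, hX2⟩
          | succ n ih =>
            obtain ⟨⟨ha1, ha2, ha3⟩, hb1, hb2, hb3⟩ := ih
            have haI : X (2*n+1) ∈ I := hmem _ (by omega)
            have hbI : X (2*n+2) ∈ I := hmem _ (by omega)
            have hc' : X (2*n+3) = φ1 (X (2*n+2)) := by
              have h2 := hXs (2*n+2) (by omega)
              rw [if_pos hb1] at h2
              have e : 2*n+2+1 = 2*n+3 := by omega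
              rwa [e] at h2
            have hcI : X (2*n+3) ∈ I := hmem _ (by omega)
            have hcge : φ1 x ≤ X (2*n+3) := by rw [hc']; exact m1 x hx _ hbI hb1
            have hcle : X (2*n+3) ≤ y01 := by
              rw [hc', ← y01eq]; exact m1 _ hbI _ hy10I hb2
            have hclt : X (2*n+3) < x := by
              rcases lt_or_ge (X (2*n+3)) x with h | h
              · exact h
              exfalso
              have e1 : X (2*n+3) = x := le_antisymm (hcle.trans hB) h
              have e2 : x = y01 := le_antisymm (e1 ▸ hcle) hB
              have e3 : φ1 (X (2*n+2)) = φ1 y10 := by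
                rw [y01eq, ← hc', e1]; exact e2
              have e4 : X (2*n+2) = y10 := inj1 _ hbI _ hy10I e3
              have e5 : X (2*n+1) = y01 := by
                refine inj0 _ haI _ hy01I ?_
                rw [← hb3, e4, y10eq]
              rw [e5, e2] at ha3
              exact lt_irrefl _ ha3
            have hd : X (2*n+4) = φ0 (X (2*n+3)) := by
              have h2 := hXs (2*n+3) (by omega)
              rw [if_neg (not_le.mpr hclt)] at h2
              have e : 2*n+3+1 = 2*n+4 := by omega
              rwa [e] at h2
            have hdge : x ≤ X (2*n+4) := by
              rw [hd]
              calc x ≤ φ0 (φ1 x) := hxh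
                _ ≤ φ0 (X (2*n+3)) := m0 _ (h1maps hx) _ hcI hcge
            have hdle : X (2*n+4) ≤ y10 := by
              rw [hd, ← y10eq]; exact m0 _ hcI _ hy01I hcle
            have e1 : 2*(n+1)+1 = 2*n+3 := by omega
            have e2 : 2*(n+1)+2 = 2*n+4 := by omega
            rw [e1, e2]
            exact ⟨⟨hcge, hcle, hclt⟩, hdge, hdle, hd⟩
        have cond01 : ∀ k, 1 ≤ k →
            X (k + 1) = if periodLetter [false, true] k then φ1 (X k) else φ0 (X k) := by
          intro k hk
          rcases Nat.even_or_odd k with ⟨m, hm⟩ | ⟨m, hm⟩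
          · have hm1 : 1 ≤ m := by omega
            have e : 2*(m-1)+2 = k := by omega
            have hxle : x ≤ X k := by
              have h2 := (inv3 (m-1)).2.1
              rwa [e] at h2
            rw [periodLetter_pair_even k (by omega)]
            rw [hXs k hk, if_pos hxle]
            simp
          · have e : 2*m+1 = k := hm.symm
            have hxgt : X k < x := by
              have h2 := (inv3 m).1.2.2
              rwa [e] at h2
            rw [periodLetter_pair_odd k (by omega)]
            rw [hXs k hk, if_neg (not_le.mpr hxgt)]
            simp
        have min01 : ∀ v : List Bool, v ≠ [] →
            (∀ k, 1 ≤ k → X (k + 1) = if periodLetter v k then φ1 (X k) else φ0 (X k)) →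
            ([false, true] : List Bool).length ≤ v.length := by
          intro v hv hvc
          by_contra hlen
          push_neg at hlen
          have h1 : 1 ≤ v.length := List.length_pos_iff.mpr hv
          have h2 : v.length = 1 := by simp at hlen; omega
          obtain ⟨b, rfl⟩ := List.length_eq_one_iff.mp h2
          cases b
          · refine hnotF ?_
            intro k hk
            have h3 := hvc k hk
            rw [periodLetter_singleton] at h3
            simpa using h3
          · refine hnotT ?_
            intro k hk
            have h3 := hvc k hk
            rw [periodLetter_singleton] at h3
            simpa using h3
        refine ⟨iff_of_false (fun h => hnotT (dest_true h)) (not_le.mpr hy1x),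
          iff_of_true ⟨by simp, cond01, min01⟩ (Set.mem_Icc.mpr ⟨hB, hC⟩),
          iff_of_false (fun h => hnotF (dest_false h)) (not_le.mpr (hC.trans_lt hy10y0))⟩
      · rcases lt_or_ge x y0 with hD | hD
        · -- Region R4 : y10 < x < y0, no short word
          have hub4 : ∀ k, 1 ≤ k → X k < y0 := hub hD
          have hX1lt : X 1 < x := by rw [hX1]; exact s1gt x hx hA
          have hX1gt01 : y01 < X 1 := by
            rw [hX1, ← y01eq]; exact h1inc _ hy10I _ hx hC
          have hX1gt : y1 < X 1 := hy1y01.trans hX1gt01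
          have hX2 : X 2 = φ0 (X 1) := by
            have h2 := hXs 1 le_rfl
            rwa [if_neg (not_le.mpr hX1lt)] at h2
          have hX2lt : X 2 < x := by
            rw [hX2, hX1]; exact shgt x hx hC
          have hX2gt : y1 < X 2 := by
            rw [hX2]
            calc y1 < X 1 := hX1gt
              _ < φ0 (X 1) := s0lt _ hX1I (hub4 1 le_rfl)
          have hX3 : X 3 = φ0 (X 2) := by
            have h2 := hXs 2 (by omega)
            rwa [if_neg (not_le.mpr hX2lt)] at h2
          have hnotT : ¬ ∀ k, 1 ≤ k → X (k + 1) = φ1 (X k) := by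
            intro hc
            have h1 := hc 1 le_rfl
            have h2 := s1gt _ hX1I hX1gt
            have h3 := s0lt _ hX1I (hub4 1 le_rfl)
            rw [hX2] at h1
            linarith
          have hnot01 : ¬ ∀ k, 1 ≤ k →
              X (k + 1) = if periodLetter [false, true] k then φ1 (X k) else φ0 (X k) := by
            intro hc
            have h2 := hc 2 (by omega)
            rw [periodLetter_pair_even 2 (by norm_num)] at h2
            simp only [if_true] at h2
            rw [hX3] at h2
            have h3 := s1gt _ (hmem 2 (by omega)) hX2gt
            have h4 := s0lt _ (hmem 2 (by omega)) (hub4 2 (by omega))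
            linarith
          have hnotF : ¬ ∀ k, 1 ≤ k → X (k + 1) = φ0 (X k) := by
            intro hc
            by_cases hcase : ∀ k, 1 ≤ k → X k < x
            · set u : ℕ → ℝ := fun n => X (n + 1) with hudef
              have humem : ∀ n, u n ∈ I := fun n => hmem (n + 1) (by omega)
              have hust : ∀ n, u (n + 1) = φ0 (u n) := fun n => hc (n + 1) (by omega)
              have humono : Monotone u := monotone_nat_of_le_succ fun n => by
                rw [hust n]
                exact (s0lt _ (humem n) ((hcase (n + 1) (by omega)).trans hD)).le
              obtain ⟨L, hLt, hLle, hLB⟩ :=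
                tendsto_of_mono_bdd u humono x (fun n => (hcase (n + 1) (by omega)).le)
              have hLI : L ∈ I := hI.out (humem 0) hx ⟨hLle 0, hLB⟩
              have hfixL : φ0 L = L := fix_of_orbit I φ0 lip0 u humem L hLI hust hLt
              have hLy0 := huniq0 L hLI hfixL
              rw [hLy0] at hLB
              linarith
            · push_neg at hcase
              obtain ⟨k, hk1, hk2⟩ := hcase
              have hact : X (k + 1) = φ1 (X k) := by rw [hXs k hk1, if_pos hk2]
              have hword := hc k hk1
              have h1 := s1gt _ (hmem k hk1) (hA.trans_le hk2)
              have h2 := s0lt _ (hmem k hk1) (hub4 k hk1)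
              rw [hact] at hword
              linarith
          refine ⟨iff_of_false (fun h => hnotT (dest_true h)) (not_le.mpr hA),
            iff_of_false ?_ ?_,
            iff_of_false (fun h => hnotF (dest_false h)) (not_le.mpr hD)⟩
          · rintro ⟨-, hc, -⟩; exact hnot01 hc
          · rw [Set.mem_Icc]; rintro ⟨-, h2⟩; linarith
        · -- Region R5 : y0 ≤ x, word is [false]
          have hy1x : y1 < x := hlt.trans_le hD
          have hphi0x : φ0 x ≤ x := by
            rcases hD.eq_or_lt with h | h
            · rw [← h, hfix0]
            · exact (s0gt x hx h).le
          have inv5 : ∀ k, 1 ≤ k → X k < x := by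
            intro k hk
            induction k, hk using Nat.le_induction with
            | base => rw [hX1]; exact s1gt x hx hy1x
            | succ n hn ih =>
              rw [hXs n hn, if_neg (not_le.mpr ih)]
              calc φ0 (X n) < φ0 x := h0inc _ (hmem n hn) _ hx ih
                _ ≤ x := hphi0x
          have condF : ∀ k, 1 ≤ k → X (k + 1) = φ0 (X k) := fun k hk => by
            rw [hXs k hk, if_neg (not_le.mpr (inv5 k hk))]
          refine ⟨iff_of_false ?_ ?_, iff_of_false ?_ ?_, iff_of_true (mk_false condF) hD⟩
          · intro h
            exact hboth condF (dest_true h)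
          · linarith
          · rintro ⟨-, -, hmin⟩
            have h2 := hmin [false] (by simp) (fun k hk => by
              rw [periodLetter_singleton]; simpa using condF k hk)
            simp at h2
          · rw [Set.mem_Icc]; rintro ⟨-, h2⟩; linarith
end

section
/- Let I be an interval of ℝ, φ₀, φ₁ : I → I strictly increasing maps, and z ∈ [−∞,∞]. For x ∈ I, define the itinerary σ(x|z) as the infinite binary word with σ(x|z)_t = 1 if x_t ≥ z, 0 otherwise, where x_1 = x and x_{t+1} = φ₁(x_t) if x_t ≥ z, else φ₀(x_t). If σ(x|z) ≺ σ(y|z) lexicographically, then x < y. -/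
open scoped Classical

/-- The orbit of the map-with-a-gap with threshold `z ∈ [-∞,∞]` started at `x`:
`itinOrbit φ0 φ1 z x t` is the paper's `x_{t+1}` (so index `0` is the start `x₁ = x`),
with `x_{t+1} = φ₁ x_t` if `x_t ≥ z` and `x_{t+1} = φ₀ x_t` otherwise. -/
noncomputable def itinOrbit (φ0 φ1 : ℝ → ℝ) (z : EReal) (x : ℝ) : ℕ → ℝ
  | 0 => x
  | n + 1 =>
      if z ≤ ((itinOrbit φ0 φ1 z x n : ℝ) : EReal) then φ1 (itinOrbit φ0 φ1 z x n)
      else φ0 (itinOrbit φ0 φ1 z x n)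

/-- The itinerary `σ(x|z)`: its `t`-th letter (0-indexed) is `1` iff `x_{t+1} ≥ z`. -/
noncomputable def itin (φ0 φ1 : ℝ → ℝ) (z : EReal) (x : ℝ) (t : ℕ) : Bool :=
  if z ≤ ((itinOrbit φ0 φ1 z x t : ℝ) : EReal) then true else false

/-- Strict lexicographic order on infinite binary words (`false` = 0 ≺ `true` = 1). -/
def LexLt (u v : ℕ → Bool) : Prop :=
  ∃ k, (∀ j < k, u j = v j) ∧ u k = false ∧ v k = true


lemma itinOrbit_mem (I : Set ℝ) (φ0 φ1 : ℝ → ℝ)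
    (h0maps : Set.MapsTo φ0 I I) (h1maps : Set.MapsTo φ1 I I)
    (z : EReal) (x : ℝ) (hx : x ∈ I) : ∀ t, itinOrbit φ0 φ1 z x t ∈ I := by
  intro t
  induction t with
  | zero => exact hx
  | succ n ih =>
      rw [itinOrbit]
      split
      · exact h1maps ih
      · exact h0maps ih

lemma stmt_13_aux (I : Set ℝ) (φ0 φ1 : ℝ → ℝ)
    (h0maps : Set.MapsTo φ0 I I) (h1maps : Set.MapsTo φ1 I I)
    (h0inc : ∀ x ∈ I, ∀ y ∈ I, x < y → φ0 x < φ0 y)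
    (h1inc : ∀ x ∈ I, ∀ y ∈ I, x < y → φ1 x < φ1 y)
    (z : EReal) : ∀ n (x y : ℝ), x ∈ I → y ∈ I →
    (∀ j < n, itin φ0 φ1 z x j = itin φ0 φ1 z y j) →
    itinOrbit φ0 φ1 z x n < itinOrbit φ0 φ1 z y n → x < y := by
  intro n
  induction n with
  | zero => intro x y _ _ _ hlt; exact hlt
  | succ n ih =>
      intro x y hx hy hagree hlt
      refine ih x y hx hy (fun j hj => hagree j (Nat.lt_succ_of_lt hj)) ?_
      have hxm := itinOrbit_mem I φ0 φ1 h0maps h1maps z x hx n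
      have hym := itinOrbit_mem I φ0 φ1 h0maps h1maps z y hy n
      by_contra hle
      push_neg at hle
      rcases lt_or_eq_of_le hle with hlt' | heq
      · have heq := hagree n (Nat.lt_succ_self n)
        unfold itin at heq
        rw [itinOrbit, itinOrbit] at hlt
        by_cases hzx : z ≤ ((itinOrbit φ0 φ1 z x n : ℝ) : EReal)
        · have hzy : z ≤ ((itinOrbit φ0 φ1 z y n : ℝ) : EReal) := by
            by_contra hzy
            simp [hzx, hzy] at heq
          rw [if_pos hzx, if_pos hzy] at hlt
          exact absurd (h1inc _ hym _ hxm hlt') (not_lt.mpr hlt.le)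
        · have hzy : ¬ z ≤ ((itinOrbit φ0 φ1 z y n : ℝ) : EReal) := by
            by_contra hzy
            simp [hzx, hzy] at heq
          rw [if_neg hzx, if_neg hzy] at hlt
          exact absurd (h0inc _ hym _ hxm hlt') (not_lt.mpr hlt.le)
      · rw [itinOrbit, itinOrbit, heq] at hlt
        exact lt_irrefl _ hlt

/-- For strictly increasing maps `φ₀, φ₁ : I → I` and a threshold
`z ∈ [-∞,∞]`, if `σ(x|z) ≺ σ(y|z)` lexicographically then `x < y`. -/
theorem stmt_13 (I : Set ℝ) (hI : I.OrdConnected) (φ0 φ1 : ℝ → ℝ)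
    (h0maps : Set.MapsTo φ0 I I) (h1maps : Set.MapsTo φ1 I I)
    (h0inc : ∀ x ∈ I, ∀ y ∈ I, x < y → φ0 x < φ0 y)
    (h1inc : ∀ x ∈ I, ∀ y ∈ I, x < y → φ1 x < φ1 y)
    (z : EReal) (x y : ℝ) (hx : x ∈ I) (hy : y ∈ I)
    (h : LexLt (itin φ0 φ1 z x) (itin φ0 φ1 z y)) :
    x < y := by
  obtain ⟨k, hagree, hxk, hyk⟩ := h
  unfold itin at hxk hyk
  have hzx : ¬ z ≤ ((itinOrbit φ0 φ1 z x k : ℝ) : EReal) := by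
    by_contra hc; simp [hc] at hxk
  have hzy : z ≤ ((itinOrbit φ0 φ1 z y k : ℝ) : EReal) := by
    by_contra hc; simp [hc] at hyk
  push_neg at hzx
  have hlt : itinOrbit φ0 φ1 z x k < itinOrbit φ0 φ1 z y k := by
    have := lt_of_lt_of_le hzx hzy
    exact_mod_cast this
  exact stmt_13_aux I φ0 φ1 h0maps h1maps h0inc h1inc z k x y hx hy hagree hlt
end

section
/- Suppose (0a1, 0b1) is a Christoffel pair (i.e., a node of the Christoffel tree). Then a10b = b01a as words. -/
/-- The nodes of the Christoffel tree: the root is the pair `(0, 1)` and the node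
`(u, v)` has children `(u, uv)` and `(uv, v)` (`false` = letter 0, `true` = letter 1). -/
inductive ChristoffelPair : List Bool → List Bool → Prop
  | root : ChristoffelPair [false] [true]
  | left {u v : List Bool} : ChristoffelPair u v → ChristoffelPair u (u ++ v)
  | right {u v : List Bool} : ChristoffelPair u v → ChristoffelPair (u ++ v) v

def CInv (u v : List Bool) : Prop :=
  (u = [false] ∧ v = [true]) ∨
  (u = [false] ∧ ∃ b, v = [false] ++ b ++ [true] ∧ [false] ++ b = b ++ [false]) ∨
  (v = [true] ∧ ∃ a, u = [false] ++ a ++ [true] ∧ a ++ [true] = [true] ++ a) ∨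
  (∃ a b, u = [false] ++ a ++ [true] ∧ v = [false] ++ b ++ [true] ∧
    a ++ [true, false] ++ b = b ++ [false, true] ++ a)

lemma cinv_of_pair {u v : List Bool} (h : ChristoffelPair u v) : CInv u v := by
  induction h with
  | root => exact Or.inl ⟨rfl, rfl⟩
  | left h ih =>
    rcases ih with ⟨hu, hv⟩ | ⟨hu, b, hv, hb⟩ | ⟨hv, a, hu, ha⟩ | ⟨a, b, hu, hv, hab⟩
    · subst hu; subst hv
      exact Or.inr (Or.inl ⟨rfl, [], by simp, by simp⟩)
    · subst hu; subst hv
      refine Or.inr (Or.inl ⟨rfl, false :: b, by simp, ?_⟩)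
      simpa using congrArg (false :: ·) hb
    · subst hu; subst hv
      refine Or.inr (Or.inr (Or.inr ⟨a, a ++ [true], by simp, by simp, ?_⟩))
      have ha' : a ++ [true] = true :: a := by simpa using ha
      calc a ++ [true, false] ++ (a ++ [true])
          = a ++ [true, false] ++ (true :: a) := by rw [ha']
        _ = (a ++ [true]) ++ [false, true] ++ a := by simp [List.append_assoc]
    · subst hu; subst hv
      refine Or.inr (Or.inr (Or.inr ⟨a, a ++ [true, false] ++ b, by simp, by simp [List.append_assoc], ?_⟩))
      calc a ++ [true, false] ++ (a ++ [true, false] ++ b)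
          = a ++ [true, false] ++ (b ++ [false, true] ++ a) := by rw [hab]
        _ = (a ++ [true, false] ++ b) ++ [false, true] ++ a := by simp [List.append_assoc]
  | right h ih =>
    rcases ih with ⟨hu, hv⟩ | ⟨hu, b, hv, hb⟩ | ⟨hv, a, hu, ha⟩ | ⟨a, b, hu, hv, hab⟩
    · subst hu; subst hv
      exact Or.inr (Or.inr (Or.inl ⟨rfl, [], by simp, by simp⟩))
    · subst hu; subst hv
      refine Or.inr (Or.inr (Or.inr ⟨false :: b, b, by simp, by simp, ?_⟩))
      have h1 : (false :: b) ++ [true, false] ++ b = b ++ [false] ++ [true, false] ++ b := by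
        have := congrArg (fun l => l ++ [true, false] ++ b) hb
        simpa [List.append_assoc] using this
      have h2 : b ++ [false, true] ++ (false :: b) = b ++ [false, true, false] ++ b := by
        simp
      rw [h1, h2]; simp [List.append_assoc]
    · subst hu; subst hv
      refine Or.inr (Or.inr (Or.inl ⟨rfl, a ++ [true], by simp [List.append_assoc], ?_⟩))
      simpa [List.append_assoc] using congrArg (· ++ [true]) ha
    · subst hu; subst hv
      refine Or.inr (Or.inr (Or.inr ⟨a ++ [true, false] ++ b, b, by simp [List.append_assoc], by simp, ?_⟩))
      calc (a ++ [true, false] ++ b) ++ [true, false] ++ b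
          = (b ++ [false, true] ++ a) ++ [true, false] ++ b := by rw [hab]
        _ = b ++ [false, true] ++ (a ++ [true, false] ++ b) := by simp [List.append_assoc]

/-- If `(0a1, 0b1)` is a Christoffel pair, then `a10b = b01a`. -/
theorem stmt_15 (a b : List Bool)
    (h : ChristoffelPair ([false] ++ a ++ [true]) ([false] ++ b ++ [true])) :
    a ++ [true, false] ++ b = b ++ [false, true] ++ a := by
  rcases cinv_of_pair h with ⟨hu, hv⟩ | ⟨hu, b', hv, hb⟩ | ⟨hv, a', hu, ha⟩ | ⟨a', b', hu, hv, hab⟩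
  · simp at hu
  · simp at hu
  · simp at hv
  · have ha : a' = a := by
      have := hu
      simpa using this.symm
    have hb2 : b' = b := by simpa using hv.symm
    rw [ha, hb2] at hab; exact hab
end

section
/- Suppose the word 0c1 lies in the subtree of the Christoffel tree rooted at 0p1. Then p is both a prefix and a suffix of c. -/
/-- One parent-to-child step in the Christoffel tree. -/
inductive TreeStep : List Bool × List Bool → List Bool × List Bool → Prop
  | left (u v : List Bool) : TreeStep (u, v) (u, u ++ v)
  | right (u v : List Bool) : TreeStep (u, v) (u ++ v, v)

lemma cp_decomp {u v : List Bool} (h : ChristoffelPair u v) :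
    ∃ u₂ v₂, u = false :: u₂ ∧ v = v₂ ++ [true] := by
  induction h with
  | root => exact ⟨[], [], rfl, rfl⟩
  | @left u v h ih =>
      obtain ⟨u₂, v₂, hu, hv⟩ := ih
      exact ⟨u₂, u ++ v₂, hu, by rw [hv, List.append_assoc]⟩
  | @right u v h ih =>
      obtain ⟨u₂, v₂, hu, hv⟩ := ih
      exact ⟨u₂ ++ v, v₂, by rw [hu]; rfl, hv⟩

lemma cp_exchange {u v : List Bool} (h : ChristoffelPair u v) :
    ∀ u₂ v₂, u = false :: u₂ → v = v₂ ++ [true] →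
      u ++ v = v₂ ++ [false, true] ++ u₂ := by
  induction h with
  | root =>
      intro u₂ v₂ hu hv
      have h1 : u₂ = [] := by simpa using hu.symm
      have h2 : v₂ = [] := by
        rcases v₂ with _ | ⟨a, l⟩
        · rfl
        · exact absurd hv.symm (by simp)
      subst h1; subst h2; rfl
  | @left u v h ih =>
      intro u₂ w₂ hu hw
      obtain ⟨u₂', v₂, hu', hv⟩ := cp_decomp h
      have hu2 : u₂ = u₂' := by rw [hu] at hu'; simpa using hu'
      have key := ih u₂' v₂ hu' hv
      have hw2 : w₂ = u ++ v₂ := by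
        apply List.append_cancel_right (bs := [true])
        rw [← hw, hv, List.append_assoc]
      rw [hu2, hw2, key]
      simp
  | @right u v h ih =>
      intro w₂ v₂ hw hv
      obtain ⟨u₂, v₂', hu, hv'⟩ := cp_decomp h
      have hv2 : v₂ = v₂' := by
        apply List.append_cancel_right (bs := [true])
        rw [← hv, hv']
      have key := ih u₂ v₂' hu hv'
      have hw2 : w₂ = u₂ ++ v := by
        have : u ++ v = false :: (u₂ ++ v) := by rw [hu]; rfl
        rw [this] at hw
        simpa using hw.symm
      rw [hv2, hw2, ← List.append_assoc, ← key, List.append_assoc]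

-- fact A : v₂ <+: [false] ++ u₂ ++ v₂
lemma factA {u v u₂ v₂ : List Bool} (h : ChristoffelPair u v)
    (hu : u = false :: u₂) (hv : v = v₂ ++ [true]) :
    v₂ <+: false :: u₂ ++ v₂ := by
  have key := cp_exchange h u₂ v₂ hu hv
  have h1 : v₂ <+: u ++ v := ⟨[false, true] ++ u₂, by rw [key]; simp⟩
  have h2 : (false :: u₂ ++ v₂ : List Bool) <+: u ++ v := by
    rw [hu, hv]
    exact ⟨[true], by simp⟩
  exact List.prefix_of_prefix_length_le h1 h2 (by simp; omega)

-- fact B : u₂ <:+ u₂ ++ v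
lemma factB {u v u₂ v₂ : List Bool} (h : ChristoffelPair u v)
    (hu : u = false :: u₂) (hv : v = v₂ ++ [true]) :
    u₂ <:+ u₂ ++ v := by
  have key := cp_exchange h u₂ v₂ hu hv
  have h1 : u₂ <:+ u ++ v := ⟨v₂ ++ [false, true], by rw [key]⟩
  have h2 : u₂ ++ v <:+ u ++ v := by
    rw [hu]
    exact List.suffix_cons false (u₂ ++ v)
  exact List.suffix_of_suffix_length_le h1 h2 (by simp)

lemma cp_step {a b : List Bool × List Bool} (hs : TreeStep a b)
    (h : ChristoffelPair a.1 a.2) : ChristoffelPair b.1 b.2 := by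
  cases hs with
  | left u v => exact h.left
  | right u v => exact h.right

lemma cp_rtg {a b : List Bool × List Bool}
    (hd : Relation.ReflTransGen TreeStep a b)
    (h : ChristoffelPair a.1 a.2) : ChristoffelPair b.1 b.2 := by
  induction hd with
  | refl => exact h
  | tail _ step ih => exact cp_step step ih

lemma word_eq {p q : List Bool}
    (h : [false] ++ p ++ [true] = [false] ++ q ++ [true]) : p = q := by
  simpa using h

lemma step_pc {a b a' b' : List Bool} (h : ChristoffelPair a b)
    (hs : TreeStep (a, b) (a', b')) (q c : List Bool)
    (hq : a ++ b = [false] ++ q ++ [true])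
    (hc : a' ++ b' = [false] ++ c ++ [true]) :
    q <+: c ∧ q <:+ c := by
  obtain ⟨u₂, v₂, hu, hv⟩ := cp_decomp h
  have hq' : q = u₂ ++ v₂ := by
    apply word_eq
    rw [← hq, hu, hv]; simp
  cases hs with
  | left u v =>
      -- a' = a, b' = a ++ b ; word = a ++ a ++ b
      have hc' : c = u₂ ++ [false] ++ (u₂ ++ v₂) := by
        apply word_eq
        rw [← hc, hu, hv]; simp
      subst hq'; subst hc'
      constructor
      · rw [List.append_assoc]
        exact (List.prefix_append_right_inj u₂).mpr (factA h hu hv)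
      · exact ⟨u₂ ++ [false], by simp⟩
  | right u v =>
      -- a' = a ++ b, b' = b ; word = a ++ b ++ b
      have hc' : c = u₂ ++ v₂ ++ [true] ++ v₂ := by
        apply word_eq
        rw [← hc, hu, hv]; simp
      subst hq'; subst hc'
      constructor
      · exact ⟨[true] ++ v₂, by simp⟩
      · obtain ⟨t, ht⟩ := factB h hu hv
        refine ⟨t, ?_⟩
        calc t ++ (u₂ ++ v₂) = (t ++ u₂) ++ v₂ := by simp
          _ = (u₂ ++ b) ++ v₂ := by rw [ht]
          _ = u₂ ++ v₂ ++ [true] ++ v₂ := by rw [hv]; simp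

lemma aux {a b : List Bool × List Bool} (hd : Relation.ReflTransGen TreeStep a b)
    (h : ChristoffelPair a.1 a.2) :
    ∀ p c, a.1 ++ a.2 = [false] ++ p ++ [true] →
      b.1 ++ b.2 = [false] ++ c ++ [true] → p <+: c ∧ p <:+ c := by
  induction hd with
  | refl =>
      intro p c hp hc
      have : p = c := word_eq (by rw [← hp, ← hc])
      subst this; exact ⟨List.prefix_refl _, List.suffix_refl _⟩
  | @tail m n hd' step ih =>
      intro p c hp hc
      have hm : ChristoffelPair m.1 m.2 := cp_rtg hd' h
      obtain ⟨u₂, v₂, hu, hv⟩ := cp_decomp hm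
      have hmw : m.1 ++ m.2 = [false] ++ (u₂ ++ v₂) ++ [true] := by
        rw [hu, hv]; simp
      have h1 := ih p (u₂ ++ v₂) hp hmw
      have h2 : (u₂ ++ v₂) <+: c ∧ (u₂ ++ v₂) <:+ c := by
        obtain ⟨m1, m2⟩ := m
        obtain ⟨n1, n2⟩ := n
        exact step_pc hm step _ _ hmw hc
      exact ⟨h1.1.trans h2.1, h1.2.trans h2.2⟩

/-- If the Christoffel word `0c1` (the concatenation of the node
`(u', v')`) lies in the subtree of the Christoffel tree rooted at the node `(u, v)`
whose concatenation is `0p1`, then `p` is both a prefix and a suffix of `c`. -/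
theorem stmt_16 (u v u' v' p c : List Bool)
    (hnode : ChristoffelPair u v)
    (hdesc : Relation.ReflTransGen TreeStep (u, v) (u', v'))
    (hp : u ++ v = [false] ++ p ++ [true])
    (hc : u' ++ v' = [false] ++ c ++ [true]) :
    p <+: c ∧ p <:+ c := by
  exact aux hdesc hnode p c hp hc
end

section
/- Let 0 ≤ α < β ≤ 1 and let a, b be the mechanical words of rates α and β respectively (a = the shortest word with (a^ω)_n = ⌊αn⌋ − ⌊α(n−1)⌋ for all n, similarly b). Then a^ω ≺ b^ω in lexicographic order. -/
/-- Let `0 ≤ α < β ≤ 1` and consider the infinite mechanical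
sequences with `n`-th term `⌊αn⌋ - ⌊α(n-1)⌋` and `⌊βn⌋ - ⌊β(n-1)⌋` respectively
(these are `a^ω` and `b^ω` for the mechanical words `a, b` of rates `α, β`).
Then the first sequence is strictly lexicographically smaller than the second:
at the first index where they differ the first has a `0` and the second a `1`. -/
theorem stmt_17 (α β : ℝ) (h0 : 0 ≤ α) (hab : α < β) (h1 : β ≤ 1) :
    ∃ n : ℕ, 1 ≤ n ∧
      (∀ k, 1 ≤ k → k < n →
        ⌊α * (k : ℝ)⌋ - ⌊α * ((k : ℝ) - 1)⌋ = ⌊β * (k : ℝ)⌋ - ⌊β * ((k : ℝ) - 1)⌋) ∧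
      ⌊α * (n : ℝ)⌋ - ⌊α * ((n : ℝ) - 1)⌋ < ⌊β * (n : ℝ)⌋ - ⌊β * ((n : ℝ) - 1)⌋ := by
  have hba : 0 < β - α := by linarith
  -- existence of n with ⌊αn⌋ < ⌊βn⌋
  have hex : ∃ n : ℕ, ⌊α * (n : ℝ)⌋ < ⌊β * (n : ℝ)⌋ := by
    obtain ⟨n, hn⟩ := exists_nat_gt (1 / (β - α))
    refine ⟨n, ?_⟩
    have hn1 : 1 < (n : ℝ) * (β - α) := by
      rw [div_lt_iff₀ hba] at hn
      linarith
    have : α * n + 1 ≤ β * n := by nlinarith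
    calc ⌊α * (n : ℝ)⌋ < ⌊α * (n : ℝ)⌋ + 1 := by omega
      _ = ⌊α * (n : ℝ) + 1⌋ := by rw [Int.floor_add_one]
      _ ≤ ⌊β * (n : ℝ)⌋ := Int.floor_le_floor this
  classical
  set n := Nat.find hex with hndef
  have hPn : ⌊α * (n : ℝ)⌋ < ⌊β * (n : ℝ)⌋ := Nat.find_spec hex
  have hmin : ∀ m < n, ¬ ⌊α * (m : ℝ)⌋ < ⌊β * (m : ℝ)⌋ := fun m hm => Nat.find_min hex hm
  have heq : ∀ m < n, ⌊α * (m : ℝ)⌋ = ⌊β * (m : ℝ)⌋ := by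
    intro m hm
    have hle : ⌊α * (m : ℝ)⌋ ≤ ⌊β * (m : ℝ)⌋ := by
      apply Int.floor_le_floor
      have : (0 : ℝ) ≤ (m : ℝ) := Nat.cast_nonneg m
      nlinarith
    have := hmin m hm
    omega
  have hn1 : 1 ≤ n := by
    rcases Nat.eq_zero_or_pos n with h | h
    · exfalso
      rw [h] at hPn
      simp at hPn
    · exact h
  refine ⟨n, hn1, ?_, ?_⟩
  · intro k hk1 hkn
    have h1' : ((k : ℝ) - 1) = ((k - 1 : ℕ) : ℝ) := by
      push_cast [Nat.cast_sub hk1]; ring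
    rw [h1']
    have e1 := heq k hkn
    have e2 := heq (k - 1) (by omega)
    omega
  · have h1' : ((n : ℝ) - 1) = ((n - 1 : ℕ) : ℝ) := by
      push_cast [Nat.cast_sub hn1]; ring
    rw [h1']
    have e2 := heq (n - 1) (by omega)
    omega
end

section
/- For r ∈ (0,1] and a, b ∈ ℝ with 0 ≤ a ≤ b, let F = [[r, 1/r],[ar, (a+1)/r]], G = [[r, 1/r],[br, (b+1)/r]], and K = [[r, 1/r],[r−r³, −r]]. Then det F = det G = 1, K² = I, (KF)² = I, (KG)² = I, and consequently for any finite binary word w (with M(0)=F, M(1)=G, M(w) the product M(w_{|w|})⋯M(w_1)), one has K·M(w)^{−1}·K = M(w^R), where w^R is the reverse word. Moreover, for any word w, M(w) − M(w^R) = tr(K·M(w))·K. -/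
open Matrix

private lemma foldl_mul_aux (m : Bool → Matrix (Fin 2) (Fin 2) ℝ) :
    ∀ (w : List Bool) (x : Matrix (Fin 2) (Fin 2) ℝ),
      w.foldl (fun A l => m l * A) x = w.foldl (fun A l => m l * A) 1 * x := by
  intro w
  induction w with
  | nil => intro x; simp
  | cons l w ih =>
      intro x
      simp only [List.foldl_cons]
      rw [ih (m l * x), ih (m l * 1), mul_one, mul_assoc]

private lemma key_trace (r : ℝ) (hr : r ≠ 0) (A : Matrix (Fin 2) (Fin 2) ℝ)
    (hdet : A.det = 1) :
    A - !![r, 1 / r; r - r ^ 3, -r] * A⁻¹ * !![r, 1 / r; r - r ^ 3, -r]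
      = Matrix.trace (!![r, 1 / r; r - r ^ 3, -r] * A) • !![r, 1 / r; r - r ^ 3, -r] := by
  have hinv : A⁻¹ = !![A 1 1, -(A 0 1); -(A 1 0), A 0 0] := by
    rw [Matrix.inv_def, hdet, Matrix.adjugate_fin_two]
    simp
  rw [hinv]
  ext i j
  fin_cases i <;> fin_cases j <;>
    (try simp [Matrix.mul_apply, Matrix.vecMul, dotProduct, Fin.sum_univ_two,
      Matrix.trace_fin_two, Matrix.smul_apply, Matrix.sub_apply]) <;>
    (try field_simp) <;> (try ring)

/-- For `r ∈ (0,1]` and `0 ≤ a ≤ b`, with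
`F = [[r, 1/r],[ar, (a+1)/r]]`, `G = [[r, 1/r],[br, (b+1)/r]]`,
`K = [[r, 1/r],[r-r³, -r]]`, and `M(w)` the product `M(w_{|w|})⋯M(w_1)` over a binary
word `w` (`M(0) = F`, `M(1) = G`, `M(ε) = I`):
`det F = det G = 1`, `K² = I`, `(KF)² = I`, `(KG)² = I`,
`K·M(w)⁻¹·K = M(w^R)` and `M(w) - M(w^R) = tr(K·M(w))·K` for every word `w`. -/
theorem stmt_19 (r a b : ℝ) (hr0 : 0 < r) (hr1 : r ≤ 1) (ha : 0 ≤ a) (hab : a ≤ b)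
    (F G K : Matrix (Fin 2) (Fin 2) ℝ)
    (hF : F = !![r, 1 / r; a * r, (a + 1) / r])
    (hG : G = !![r, 1 / r; b * r, (b + 1) / r])
    (hK : K = !![r, 1 / r; r - r ^ 3, -r])
    (M : List Bool → Matrix (Fin 2) (Fin 2) ℝ)
    (hM : ∀ w, M w = w.foldl (fun A l => (if l then G else F) * A) 1) :
    F.det = 1 ∧ G.det = 1 ∧ K * K = 1 ∧ (K * F) * (K * F) = 1 ∧ (K * G) * (K * G) = 1 ∧
    (∀ w : List Bool, K * (M w)⁻¹ * K = M w.reverse) ∧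
    (∀ w : List Bool, M w - M w.reverse = Matrix.trace (K * M w) • K) := by
  have hr : r ≠ 0 := ne_of_gt hr0
  have hdetF : F.det = 1 := by rw [hF, Matrix.det_fin_two_of]; field_simp; ring
  have hdetG : G.det = 1 := by rw [hG, Matrix.det_fin_two_of]; field_simp; ring
  have hKK : K * K = 1 := by
    rw [hK]; ext i j; fin_cases i <;> fin_cases j <;>
      (try simp [Matrix.mul_apply, Matrix.vecMul, dotProduct, Fin.sum_univ_two,
        Matrix.one_apply]) <;> (try field_simp) <;> (try ring)
  have hKF : (K * F) * (K * F) = 1 := by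
    rw [hK, hF]; ext i j; fin_cases i <;> fin_cases j <;>
      (try simp [Matrix.mul_apply, Matrix.vecMul, dotProduct, Fin.sum_univ_two,
        Matrix.one_apply]) <;> (try field_simp) <;> (try ring)
  have hKG : (K * G) * (K * G) = 1 := by
    rw [hK, hG]; ext i j; fin_cases i <;> fin_cases j <;>
      (try simp [Matrix.mul_apply, Matrix.vecMul, dotProduct, Fin.sum_univ_two,
        Matrix.one_apply]) <;> (try field_simp) <;> (try ring)
  have hMcons : ∀ (l : Bool) (w : List Bool),
      M (l :: w) = M w * (if l then G else F) := by
    intro l w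
    rw [hM, hM, List.foldl_cons, foldl_mul_aux (fun l => if l then G else F), mul_one]
  have hMappend : ∀ (w : List Bool) (l : Bool),
      M (w ++ [l]) = (if l then G else F) * M w := by
    intro w l
    rw [hM, hM, List.foldl_append]
    simp
  have hMnil : M [] = 1 := by rw [hM]; rfl
  have hsplit : ∀ X Y : Matrix (Fin 2) (Fin 2) ℝ,
      K * (X * Y) * K = (K * X * K) * (K * Y * K) := by
    intro X Y
    rw [show (K * X * K) * (K * Y * K) = K * X * (K * K) * (Y * K) from by noncomm_ring,
      hKK]
    noncomm_ring
  have hKmK : ∀ l : Bool, K * (if l then G else F)⁻¹ * K = (if l then G else F) := by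
    intro l
    have h : ((if l then G else F)⁻¹ : Matrix (Fin 2) (Fin 2) ℝ)
        = K * (if l then G else F) * K := by
      refine Matrix.inv_eq_left_inv ?_
      cases l
      · simpa [mul_assoc] using hKF
      · simpa [mul_assoc] using hKG
    rw [h, show K * (K * (if l then G else F) * K) * K
        = (K * K) * (if l then G else F) * (K * K) from by noncomm_ring, hKK]
    simp
  have hdetm : ∀ l : Bool, ((if l then G else F) : Matrix (Fin 2) (Fin 2) ℝ).det = 1 := by
    intro l; cases l <;> simpa
  have hdetM : ∀ w, (M w).det = 1 := by
    intro w
    induction w with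
    | nil => rw [hMnil]; simp
    | cons l w ih => rw [hMcons, Matrix.det_mul, ih, hdetm, one_mul]
  have hrev : ∀ w : List Bool, K * (M w)⁻¹ * K = M w.reverse := by
    intro w
    induction w with
    | nil => rw [hMnil]; simp [hMnil, hKK]
    | cons l w ih =>
        rw [hMcons, Matrix.mul_inv_rev, List.reverse_cons, hMappend, hsplit,
          hKmK l, ih]
  refine ⟨hdetF, hdetG, hKK, hKF, hKG, hrev, ?_⟩
  intro w
  have h1 := hrev w
  rw [hK] at h1
  rw [hK, ← h1]
  exact key_trace r hr (M w) (hdetM w)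
end
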